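/- arXiv:1312.7100 — 8 statements merged into one kernel-verified Lean document; each statement's English description precedes it below -/
import Mathlib

section
/- Let 0 < a < b, M ≥ 0, and let f : [a,b] → ℝ be M-Lipschitz. Then for all x ∈ [a,b], | f(x) - (1/(ln b - ln a)) ∫_a^b f(t)/t dt | ≤ [M/(ln b - ln a)] { x·ln(x²/(ab)) + (a + b - 2x) }. -/
private lemma aux_cont_int {g : ℝ → ℝ} {a b c d : ℝ} (ha : 0 < a)
    (hg : ContinuousOn g (Set.Icc a b)) (hc : c ∈ Set.Icc a b) (hd : d ∈ Set.Icc a b) :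
    IntervalIntegrable (fun t => g t / t) MeasureTheory.volume c d := by
  apply ContinuousOn.intervalIntegrable
  apply ContinuousOn.div
  · exact hg.mono (Set.uIcc_subset_Icc hc hd)
  · exact continuousOn_id
  · intro t ht
    have := (Set.uIcc_subset_Icc hc hd ht).1
    exact ne_of_gt (lt_of_lt_of_le ha this)

private lemma aux_piece (a x c : ℝ) (ha : 0 < a) (hac : a ≤ c) :
    ∫ t in a..c, x / t = x * (Real.log c - Real.log a) := by
  have hc0 : 0 < c := lt_of_lt_of_le ha hac
  have h0 : (0:ℝ) ∉ Set.uIcc a c := by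
    rw [Set.uIcc_of_le hac]
    intro h; exact absurd h.1 (not_le.2 ha)
  have : ∫ t in a..c, x / t = ∫ t in a..c, x * (1/t) := by
    apply intervalIntegral.integral_congr; intro t _; ring
  rw [this, intervalIntegral.integral_const_mul, integral_one_div h0,
    Real.log_div hc0.ne' ha.ne']

private lemma aux_abs_int (a b x : ℝ) (ha : 0 < a) (hax : a ≤ x) (hxb : x ≤ b) :
    ∫ t in a..b, |x - t| / t = x * Real.log (x ^ 2 / (a * b)) + (a + b - 2 * x) := by
  have hx0 : 0 < x := lt_of_lt_of_le ha hax
  have hb0 : 0 < b := lt_of_lt_of_le hx0 hxb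
  have habs : ContinuousOn (fun t => |x - t|) (Set.Icc a b) :=
    (continuous_const.sub continuous_id).abs.continuousOn
  have h1 : ∫ t in a..x, |x - t| / t = x * (Real.log x - Real.log a) - (x - a) := by
    have hcong : ∫ t in a..x, |x - t| / t = ∫ t in a..x, (x / t - 1) := by
      apply intervalIntegral.integral_congr
      intro t ht
      rw [Set.uIcc_of_le hax] at ht
      have ht0 : 0 < t := lt_of_lt_of_le ha ht.1
      show |x - t| / t = x / t - 1
      rw [abs_of_nonneg (sub_nonneg.2 ht.2)]
      field_simp
    rw [hcong, intervalIntegral.integral_sub, aux_piece a x x ha hax,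
      intervalIntegral.integral_const]
    · simp only [smul_eq_mul]; ring
    · exact aux_cont_int ha continuousOn_const (Set.left_mem_Icc.2 (hax.trans hxb))
        ⟨hax, hxb⟩
    · exact intervalIntegrable_const
  have h2 : ∫ t in x..b, |x - t| / t = (b - x) - x * (Real.log b - Real.log x) := by
    have hcong : ∫ t in x..b, |x - t| / t = ∫ t in x..b, (1 - x / t) := by
      apply intervalIntegral.integral_congr
      intro t ht
      rw [Set.uIcc_of_le hxb] at ht
      have ht0 : 0 < t := lt_of_lt_of_le hx0 ht.1
      show |x - t| / t = 1 - x / t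
      rw [abs_of_nonpos (sub_nonpos.2 ht.1)]
      field_simp
      ring
    have hint : IntervalIntegrable (fun t => x / t) MeasureTheory.volume x b := by
      have := aux_cont_int hx0 (g := fun _ => x) continuousOn_const
        (Set.left_mem_Icc.2 hxb) (Set.right_mem_Icc.2 hxb)
      exact this
    rw [hcong, intervalIntegral.integral_sub intervalIntegrable_const hint,
      aux_piece x x b hx0 hxb, intervalIntegral.integral_const]
    simp only [smul_eq_mul]; ring
  have hsplit : (∫ t in a..x, |x - t| / t) + ∫ t in x..b, |x - t| / t
      = ∫ t in a..b, |x - t| / t := by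
    exact intervalIntegral.integral_add_adjacent_intervals
      (aux_cont_int ha habs (Set.left_mem_Icc.2 (hax.trans hxb)) ⟨hax, hxb⟩)
      (aux_cont_int ha habs ⟨hax, hxb⟩ (Set.right_mem_Icc.2 (hax.trans hxb)))
  rw [← hsplit, h1, h2]
  have hlog : Real.log (x ^ 2 / (a * b)) = 2 * Real.log x - (Real.log a + Real.log b) := by
    rw [Real.log_div (by positivity) (by positivity), Real.log_pow,
      Real.log_mul ha.ne' hb0.ne']
    push_cast; ring
  rw [hlog]; ring

/-- Corollary (λ = 0, α = 1 case) of Theorem 2.1: Ostrowski-type inequality for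
`M`-Lipschitzian functions. -/
theorem stmt_2 (a b M : ℝ) (ha : 0 < a) (hab : a < b) (hM : 0 ≤ M)
    (f : ℝ → ℝ)
    (hf : ∀ x ∈ Set.Icc a b, ∀ y ∈ Set.Icc a b, |f x - f y| ≤ M * |x - y|)
    (x : ℝ) (hx : x ∈ Set.Icc a b) :
    |f x - (1 / (Real.log b - Real.log a)) * ∫ t in a..b, f t / t|
    ≤ M / (Real.log b - Real.log a) *
        (x * Real.log (x ^ 2 / (a * b)) + (a + b - 2 * x)) := by
  obtain ⟨hax, hxb⟩ := hx
  have hb0 : 0 < b := ha.trans hab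
  have hx0 : 0 < x := lt_of_lt_of_le ha hax
  set L := Real.log b - Real.log a with hLdef
  have hL0 : 0 < L := sub_pos.2 (Real.log_lt_log ha hab)
  have hcont : ContinuousOn f (Set.Icc a b) := by
    have : LipschitzOnWith M.toNNReal f (Set.Icc a b) := by
      apply LipschitzOnWith.of_dist_le_mul
      intro p hp q hq
      simpa [Real.dist_eq, Real.coe_toNNReal M hM] using hf p hp q hq
    exact this.continuousOn
  have hmemA : a ∈ Set.Icc a b := Set.left_mem_Icc.2 hab.le
  have hmemB : b ∈ Set.Icc a b := Set.right_mem_Icc.2 hab.le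
  have hfint : IntervalIntegrable (fun t => f t / t) MeasureTheory.volume a b :=
    aux_cont_int ha hcont hmemA hmemB
  have hcint : IntervalIntegrable (fun t => f x / t) MeasureTheory.volume a b :=
    aux_cont_int ha continuousOn_const hmemA hmemB
  have key : f x - (1 / L) * ∫ t in a..b, f t / t
      = (1 / L) * ∫ t in a..b, (f x - f t) / t := by
    have hcong : ∫ t in a..b, (f x - f t) / t
        = ∫ t in a..b, (f x / t - f t / t) := by
      apply intervalIntegral.integral_congr; intro t _; ring
    rw [hcong, intervalIntegral.integral_sub hcint hfint,
      aux_piece a (f x) b ha hab.le, ← hLdef]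
    field_simp
  rw [key, abs_mul, abs_of_pos (by positivity : (0:ℝ) < 1 / L)]
  have hbound : |∫ t in a..b, (f x - f t) / t|
      ≤ M * (x * Real.log (x ^ 2 / (a * b)) + (a + b - 2 * x)) := by
    calc |∫ t in a..b, (f x - f t) / t| ≤ ∫ t in a..b, |(f x - f t) / t| := by
          apply intervalIntegral.abs_integral_le_integral_abs hab.le
      _ ≤ ∫ t in a..b, M * (|x - t| / t) := by
          apply intervalIntegral.integral_mono_on hab.le
          · exact (aux_cont_int ha ((continuousOn_const.sub hcont)) hmemA hmemB).abs
          · apply IntervalIntegrable.const_mul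
            exact aux_cont_int ha
              ((continuous_const.sub continuous_id).abs.continuousOn) hmemA hmemB
          · intro t ht
            have ht0 : 0 < t := lt_of_lt_of_le ha ht.1
            rw [abs_div, abs_of_pos ht0, ← mul_div_assoc]
            gcongr
            exact hf x ⟨hax, hxb⟩ t ht
      _ = M * (x * Real.log (x ^ 2 / (a * b)) + (a + b - 2 * x)) := by
          rw [intervalIntegral.integral_const_mul, aux_abs_int a b x ha hax hxb]
  calc (1/L) * |∫ t in a..b, (f x - f t) / t|
      ≤ (1/L) * (M * (x * Real.log (x ^ 2 / (a * b)) + (a + b - 2 * x))) := by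
        apply mul_le_mul_of_nonneg_left hbound (by positivity)
    _ = M / L * (x * Real.log (x ^ 2 / (a * b)) + (a + b - 2 * x)) := by ring
end

section
/- Let 0 < a < b, M ≥ 0, and let f : [a,b] → ℝ be M-Lipschitz. Then | f(√(ab)) - (1/(ln b - ln a)) ∫_a^b f(t)/t dt | ≤ [M/(ln b - ln a)] (a + b - 2√(ab)). -/
open intervalIntegral Real

lemma aux_int (c s e : ℝ) (hs : 0 < s) (hse : s ≤ e) :
    ∫ t in s..e, (c / t - 1) = c * (Real.log e - Real.log s) - (e - s) := by
  have he : 0 < e := lt_of_lt_of_le hs hse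
  have h0 : (0 : ℝ) ∉ Set.uIcc s e := Set.notMem_uIcc_of_lt hs he
  have hcont : ContinuousOn (fun t : ℝ => c / t) (Set.uIcc s e) := by
    apply ContinuousOn.div continuousOn_const continuousOn_id
    intro t ht hx
    exact h0 (hx ▸ ht)
  have h1 : IntervalIntegrable (fun t : ℝ => c / t) MeasureTheory.volume s e :=
    hcont.intervalIntegrable
  have h2 : IntervalIntegrable (fun _ : ℝ => (1:ℝ)) MeasureTheory.volume s e :=
    intervalIntegrable_const
  have key : (∫ t in s..e, c / t) = c * Real.log (e / s) := by
    have : (fun t : ℝ => c / t) = fun t : ℝ => c * t⁻¹ := by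
      funext t; rw [div_eq_mul_inv]
    rw [this, intervalIntegral.integral_const_mul, integral_inv h0]
  rw [intervalIntegral.integral_sub h1 h2, intervalIntegral.integral_const, smul_eq_mul,
    key, Real.log_div (ne_of_gt he) (ne_of_gt hs)]
  ring

/-- Inequality (3.1): midpoint (geometric mean) inequality for `M`-Lipschitzian
functions. -/
theorem stmt_4 (a b M : ℝ) (ha : 0 < a) (hab : a < b) (hM : 0 ≤ M)
    (f : ℝ → ℝ)
    (hf : ∀ x ∈ Set.Icc a b, ∀ y ∈ Set.Icc a b, |f x - f y| ≤ M * |x - y|) :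
    |f (Real.sqrt (a * b)) - (1 / (Real.log b - Real.log a)) * ∫ t in a..b, f t / t|
    ≤ M / (Real.log b - Real.log a) * (a + b - 2 * Real.sqrt (a * b)) := by
  have hb : 0 < b := ha.trans hab
  set g := Real.sqrt (a * b) with hgdef
  set L := Real.log b - Real.log a with hLdef
  have hL : 0 < L := sub_pos.mpr (Real.log_lt_log ha hab)
  have hgsq : g ^ 2 = a * b := Real.sq_sqrt (by positivity)
  have hgnn : 0 ≤ g := Real.sqrt_nonneg _
  have hag : a ≤ g := by nlinarith
  have hgb : g ≤ b := by nlinarith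
  have hg0 : 0 < g := lt_of_lt_of_le ha hag
  have hgmem : g ∈ Set.Icc a b := ⟨hag, hgb⟩
  have huIcc : Set.uIcc a b = Set.Icc a b := Set.uIcc_of_le hab.le
  -- continuity of f on [a,b]
  have hlip : LipschitzOnWith (Real.toNNReal M) f (Set.Icc a b) := by
    rw [lipschitzOnWith_iff_dist_le_mul]
    intro x hx y hy
    rw [Real.dist_eq, Real.dist_eq, Real.coe_toNNReal M hM]
    exact hf x hx y hy
  have hfc : ContinuousOn f (Set.Icc a b) := hlip.continuousOn
  have hne : ∀ t ∈ Set.Icc a b, t ≠ 0 := fun t ht => ne_of_gt (lt_of_lt_of_le ha ht.1)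
  -- integrability
  have hI1 : IntervalIntegrable (fun t => f t / t) MeasureTheory.volume a b := by
    apply ContinuousOn.intervalIntegrable
    rw [huIcc]
    exact hfc.div continuousOn_id hne
  have hI2 : IntervalIntegrable (fun t => f g / t) MeasureTheory.volume a b := by
    apply ContinuousOn.intervalIntegrable
    rw [huIcc]
    exact continuousOn_const.div continuousOn_id hne
  have hI3 : IntervalIntegrable (fun t => |(f g - f t) / t|) MeasureTheory.volume a b := by
    apply ContinuousOn.intervalIntegrable
    rw [huIcc]
    exact ((continuousOn_const.sub hfc).div continuousOn_id hne).abs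
  have hcb : ContinuousOn (fun t => M * |g - t| / t) (Set.Icc a b) :=
    (continuousOn_const.mul (continuousOn_const.sub continuousOn_id).abs).div
      continuousOn_id hne
  have hI4 : IntervalIntegrable (fun t => M * |g - t| / t) MeasureTheory.volume a b := by
    apply ContinuousOn.intervalIntegrable
    rw [huIcc]; exact hcb
  have hIa : IntervalIntegrable (fun t => M * |g - t| / t) MeasureTheory.volume a g := by
    apply ContinuousOn.intervalIntegrable
    rw [Set.uIcc_of_le hag]
    exact hcb.mono (Set.Icc_subset_Icc le_rfl hgb)
  have hIb : IntervalIntegrable (fun t => M * |g - t| / t) MeasureTheory.volume g b := by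
    apply ContinuousOn.intervalIntegrable
    rw [Set.uIcc_of_le hgb]
    exact hcb.mono (Set.Icc_subset_Icc hag le_rfl)
  -- ∫ f g / t = f g * L
  have hgL : (∫ t in a..b, f g / t) = f g * L := by
    have h0 : (0 : ℝ) ∉ Set.uIcc a b := by
      rw [huIcc]; intro h; exact (hne 0 h) rfl
    have : (fun t : ℝ => f g / t) = fun t : ℝ => f g * t⁻¹ := by
      funext t; rw [div_eq_mul_inv]
    rw [this, intervalIntegral.integral_const_mul, integral_inv h0,
      Real.log_div (ne_of_gt hb) (ne_of_gt ha)]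
  -- the key identity
  set J := ∫ t in a..b, (f g - f t) / t with hJdef
  have hJeq : J = f g * L - ∫ t in a..b, f t / t := by
    rw [hJdef]
    have : (∫ t in a..b, (f g - f t) / t) = ∫ t in a..b, (f g / t - f t / t) := by
      apply intervalIntegral.integral_congr
      intro t _
      dsimp only
      rw [sub_div]
    rw [this, intervalIntegral.integral_sub hI2 hI1, hgL]
  -- log relation: 2 log g = log a + log b
  have hlogg : 2 * Real.log g = Real.log a + Real.log b := by
    rw [hgdef, Real.log_sqrt (by positivity), Real.log_mul (ne_of_gt ha) (ne_of_gt hb)]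
    ring
  -- compute the bound integral
  have hbound : (∫ t in a..b, M * |g - t| / t) = M * (a + b - 2 * g) := by
    rw [← intervalIntegral.integral_add_adjacent_intervals hIa hIb]
    have e1 : (∫ t in a..g, M * |g - t| / t) = ∫ t in a..g, M * (g / t - 1) := by
      apply intervalIntegral.integral_congr
      intro t ht
      rw [Set.uIcc_of_le hag] at ht
      have ht0 : 0 < t := lt_of_lt_of_le ha ht.1
      dsimp only
      rw [abs_of_nonneg (by linarith [ht.2]), mul_div_assoc, sub_div, div_self (ne_of_gt ht0)]
    have e2 : (∫ t in g..b, M * |g - t| / t) = ∫ t in g..b, (-M) * (g / t - 1) := by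
      apply intervalIntegral.integral_congr
      intro t ht
      rw [Set.uIcc_of_le hgb] at ht
      have ht0 : 0 < t := lt_of_lt_of_le hg0 ht.1
      dsimp only
      rw [abs_of_nonpos (by linarith [ht.1]), neg_sub, mul_div_assoc, sub_div,
        div_self (ne_of_gt ht0)]
      ring
    rw [e1, e2, intervalIntegral.integral_const_mul, intervalIntegral.integral_const_mul,
      aux_int g a g ha hag, aux_int g g b hg0 hgb]
    linear_combination M * g * hlogg
  -- pointwise bound
  have hpt : ∀ t ∈ Set.Icc a b, |(f g - f t) / t| ≤ M * |g - t| / t := by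
    intro t ht
    have ht0 : 0 < t := lt_of_lt_of_le ha ht.1
    rw [abs_div, abs_of_pos ht0]
    gcongr
    exact hf g hgmem t ht
  have hJbound : |J| ≤ M * (a + b - 2 * g) := by
    calc |J| ≤ ∫ t in a..b, |(f g - f t) / t| :=
          intervalIntegral.abs_integral_le_integral_abs hab.le
      _ ≤ ∫ t in a..b, M * |g - t| / t :=
          intervalIntegral.integral_mono_on hab.le hI3 hI4 hpt
      _ = M * (a + b - 2 * g) := hbound
  -- finish
  have hmain : f g - (1 / L) * (∫ t in a..b, f t / t) = (1 / L) * J := by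
    rw [hJeq]
    field_simp
  rw [hmain, abs_mul, abs_of_pos (by positivity : (0:ℝ) < 1 / L)]
  calc (1 / L) * |J| ≤ (1 / L) * (M * (a + b - 2 * g)) :=
        mul_le_mul_of_nonneg_left hJbound (by positivity)
    _ = M / L * (a + b - 2 * g) := by ring
end

section
/- Let 0 < a < b, M ≥ 0, and let f : [a,b] → ℝ be M-Lipschitz. Then | (f(a) + f(b))/2 - (1/(ln b - ln a)) ∫_a^b f(t)/t dt | ≤ [M/(ln b - ln a)] { [(b-a)/2] ln(b/a) - (a + b - 2√(ab)) }. -/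
open intervalIntegral Real

/-- Inequality (3.2): trapezoid-type inequality for `M`-Lipschitzian functions. -/
theorem stmt_6 (a b M : ℝ) (ha : 0 < a) (hab : a < b) (hM : 0 ≤ M)
    (f : ℝ → ℝ)
    (hf : ∀ x ∈ Set.Icc a b, ∀ y ∈ Set.Icc a b, |f x - f y| ≤ M * |x - y|) :
    |(f a + f b) / 2 - (1 / (Real.log b - Real.log a)) * ∫ t in a..b, f t / t|
    ≤ M / (Real.log b - Real.log a) *
        ((b - a) / 2 * Real.log (b / a) - (a + b - 2 * Real.sqrt (a * b))) := by
  have hb : 0 < b := ha.trans hab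
  set c := Real.sqrt (a * b) with hcdef
  have hc0 : 0 < c := Real.sqrt_pos.mpr (by positivity)
  have hac : a < c := by
    have h1 : Real.sqrt (a * a) < Real.sqrt (a * b) :=
      Real.sqrt_lt_sqrt (by positivity) (by nlinarith)
    rwa [Real.sqrt_mul_self ha.le] at h1
  have hcb : c < b := by
    have h1 : Real.sqrt (a * b) < Real.sqrt (b * b) :=
      Real.sqrt_lt_sqrt (by positivity) (by nlinarith)
    rwa [Real.sqrt_mul_self hb.le] at h1
  set L := Real.log b - Real.log a with hLdef
  have hL : 0 < L := sub_pos.mpr (Real.log_lt_log ha hab)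
  have hlogc : Real.log c = (Real.log a + Real.log b) / 2 := by
    rw [hcdef, Real.log_sqrt (by positivity), Real.log_mul ha.ne' hb.ne']
  -- continuity of f on [a,b]
  have hlip : LipschitzOnWith (Real.toNNReal M) f (Set.Icc a b) := by
    rw [lipschitzOnWith_iff_dist_le_mul]
    intro x hx y hy
    rw [Real.dist_eq, Real.dist_eq, Real.coe_toNNReal M hM]
    exact hf x hx y hy
  have hcont : ContinuousOn f (Set.Icc a b) := hlip.continuousOn
  -- integrability of f t / t on subintervals
  have hint : ∀ u v : ℝ, a ≤ u → u ≤ v → v ≤ b →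
      IntervalIntegrable (fun t => f t / t) MeasureTheory.volume u v := by
    intro u v hu huv hv
    have hsub : Set.Icc u v ⊆ Set.Icc a b := Set.Icc_subset_Icc hu hv
    have : ContinuousOn (fun t => f t / t) (Set.Icc u v) := by
      apply ((hcont.mono hsub).div continuousOn_id)
      intro t ht
      exact (lt_of_lt_of_le ha (hu.trans ht.1)).ne'
    exact this.intervalIntegrable_of_Icc huv
  have hintc : ∀ k : ℝ, ∀ u v : ℝ, a ≤ u → u ≤ v → v ≤ b →
      IntervalIntegrable (fun t => k / t) MeasureTheory.volume u v := by
    intro k u v hu huv hv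
    have : ContinuousOn (fun t : ℝ => k / t) (Set.Icc u v) := by
      apply (continuousOn_const.div continuousOn_id)
      intro t ht
      exact (lt_of_lt_of_le ha (hu.trans ht.1)).ne'
    exact this.intervalIntegrable_of_Icc huv
  -- split the integral
  have hsplit : (∫ t in a..b, f t / t) =
      (∫ t in a..c, f t / t) + ∫ t in c..b, f t / t :=
    (integral_add_adjacent_intervals (hint a c le_rfl hac.le hcb.le)
      (hint c b hac.le hcb.le le_rfl)).symm
  -- constant integrals
  have hconst1 : (∫ t in a..c, f a / t) = f a * (L / 2) := by
    have : (∫ t in a..c, f a / t) = f a * ∫ t in a..c, 1 / t := by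
      rw [← intervalIntegral.integral_const_mul]
      congr 1; ext t; ring
    rw [this, integral_one_div_of_pos ha hc0, Real.log_div hc0.ne' ha.ne', hlogc]
    ring
  have hconst2 : (∫ t in c..b, f b / t) = f b * (L / 2) := by
    have : (∫ t in c..b, f b / t) = f b * ∫ t in c..b, 1 / t := by
      rw [← intervalIntegral.integral_const_mul]
      congr 1; ext t; ring
    rw [this, integral_one_div_of_pos hc0 hb, Real.log_div hb.ne' hc0.ne', hlogc]
    ring
  -- the key identity
  have hid : (f a + f b) / 2 - (1 / L) * ∫ t in a..b, f t / t =
      (1 / L) * ((∫ t in a..c, (f a - f t) / t) + ∫ t in c..b, (f b - f t) / t) := by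
    have e1 : (∫ t in a..c, (f a - f t) / t) =
        (∫ t in a..c, f a / t) - ∫ t in a..c, f t / t := by
      rw [← intervalIntegral.integral_sub (hintc (f a) a c le_rfl hac.le hcb.le)
        (hint a c le_rfl hac.le hcb.le)]
      congr 1; ext t; ring
    have e2 : (∫ t in c..b, (f b - f t) / t) =
        (∫ t in c..b, f b / t) - ∫ t in c..b, f t / t := by
      rw [← intervalIntegral.integral_sub (hintc (f b) c b hac.le hcb.le le_rfl)
        (hint c b hac.le hcb.le le_rfl)]
      congr 1; ext t; ring
    rw [e1, e2, hconst1, hconst2, hsplit]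
    field_simp
    ring
  -- pointwise bounds and integral bounds
  have hb1 : |∫ t in a..c, (f a - f t) / t| ≤ ∫ t in a..c, M * (t - a) / t := by
    have hgint : IntervalIntegrable (fun t => M * (t - a) / t) MeasureTheory.volume a c := by
      have : ContinuousOn (fun t : ℝ => M * (t - a) / t) (Set.Icc a c) := by
        apply ContinuousOn.div (by fun_prop) continuousOn_id
        intro t ht
        exact (lt_of_lt_of_le ha ht.1).ne'
      exact this.intervalIntegrable_of_Icc hac.le
    have hnn : (0:ℝ) ≤ ∫ t in a..c, M * (t - a) / t := by
      apply intervalIntegral.integral_nonneg hac.le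
      intro t ht
      have ht0 : 0 < t := lt_of_lt_of_le ha ht.1
      have : 0 ≤ t - a := by linarith [ht.1]
      positivity
    calc |∫ t in a..c, (f a - f t) / t| = ‖∫ t in a..c, (f a - f t) / t‖ :=
          (Real.norm_eq_abs _).symm
      _ ≤ |∫ t in a..c, M * (t - a) / t| := by
          apply intervalIntegral.norm_integral_le_abs_of_norm_le ?_ hgint
          filter_upwards [MeasureTheory.ae_restrict_mem measurableSet_uIoc] with t ht
          rw [Set.uIoc_of_le hac.le] at ht
          have ht0 : 0 < t := ha.trans ht.1
          rw [Real.norm_eq_abs, abs_div, abs_of_pos ht0]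
          gcongr
          calc |f a - f t| ≤ M * |a - t| :=
                hf a ⟨le_rfl, hab.le⟩ t ⟨ht.1.le, ht.2.trans hcb.le⟩
            _ = M * (t - a) := by rw [abs_of_nonpos (by linarith [ht.1])]; ring
      _ = ∫ t in a..c, M * (t - a) / t := abs_of_nonneg hnn
  have hb2 : |∫ t in c..b, (f b - f t) / t| ≤ ∫ t in c..b, M * (b - t) / t := by
    have hgint : IntervalIntegrable (fun t => M * (b - t) / t) MeasureTheory.volume c b := by
      have : ContinuousOn (fun t : ℝ => M * (b - t) / t) (Set.Icc c b) := by
        apply ContinuousOn.div (by fun_prop) continuousOn_id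
        intro t ht
        exact (lt_of_lt_of_le hc0 ht.1).ne'
      exact this.intervalIntegrable_of_Icc hcb.le
    have hnn : (0:ℝ) ≤ ∫ t in c..b, M * (b - t) / t := by
      apply intervalIntegral.integral_nonneg hcb.le
      intro t ht
      have ht0 : 0 < t := lt_of_lt_of_le hc0 ht.1
      have : 0 ≤ b - t := by linarith [ht.2]
      positivity
    calc |∫ t in c..b, (f b - f t) / t| = ‖∫ t in c..b, (f b - f t) / t‖ :=
          (Real.norm_eq_abs _).symm
      _ ≤ |∫ t in c..b, M * (b - t) / t| := by
          apply intervalIntegral.norm_integral_le_abs_of_norm_le ?_ hgint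
          filter_upwards [MeasureTheory.ae_restrict_mem measurableSet_uIoc] with t ht
          rw [Set.uIoc_of_le hcb.le] at ht
          have ht0 : 0 < t := hc0.trans ht.1
          rw [Real.norm_eq_abs, abs_div, abs_of_pos ht0]
          gcongr
          calc |f b - f t| ≤ M * |b - t| :=
                hf b ⟨hab.le, le_rfl⟩ t ⟨hac.le.trans ht.1.le, ht.2⟩
            _ = M * (b - t) := by rw [abs_of_nonneg (by linarith [ht.2])]
      _ = ∫ t in c..b, M * (b - t) / t := abs_of_nonneg hnn
  -- compute the bounding integrals
  have hMa : IntervalIntegrable (fun t : ℝ => M * a * (1 / t)) MeasureTheory.volume a c := by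
    simpa [div_eq_mul_inv] using hintc (M * a) a c le_rfl hac.le hcb.le
  have hMb : IntervalIntegrable (fun t : ℝ => M * b * (1 / t)) MeasureTheory.volume c b := by
    simpa [div_eq_mul_inv] using hintc (M * b) c b hac.le hcb.le le_rfl
  have hI1 : (∫ t in a..c, M * (t - a) / t) = M * ((c - a) - a * (Real.log c - Real.log a)) := by
    have e : (∫ t in a..c, M * (t - a) / t) = ∫ t in a..c, (M - M * a * (1 / t)) := by
      apply intervalIntegral.integral_congr
      intro t ht
      rw [Set.uIcc_of_le hac.le] at ht
      have ht0 : (0:ℝ) < t := lt_of_lt_of_le ha ht.1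
      field_simp
    rw [e, intervalIntegral.integral_sub intervalIntegrable_const hMa,
      intervalIntegral.integral_const, intervalIntegral.integral_const_mul,
      integral_one_div_of_pos ha hc0, Real.log_div hc0.ne' ha.ne', smul_eq_mul]
    ring
  have hI2 : (∫ t in c..b, M * (b - t) / t) = M * (b * (Real.log b - Real.log c) - (b - c)) := by
    have e : (∫ t in c..b, M * (b - t) / t) = ∫ t in c..b, (M * b * (1 / t) - M) := by
      apply intervalIntegral.integral_congr
      intro t ht
      rw [Set.uIcc_of_le hcb.le] at ht
      have ht0 : (0:ℝ) < t := lt_of_lt_of_le hc0 ht.1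
      field_simp
    rw [e, intervalIntegral.integral_sub hMb intervalIntegrable_const,
      intervalIntegral.integral_const, intervalIntegral.integral_const_mul,
      integral_one_div_of_pos hc0 hb, Real.log_div hb.ne' hc0.ne', smul_eq_mul]
    ring
  -- combine
  rw [hid, abs_mul, abs_of_pos (by positivity : (0:ℝ) < 1 / L)]
  have hsum : |(∫ t in a..c, (f a - f t) / t) + ∫ t in c..b, (f b - f t) / t|
      ≤ (∫ t in a..c, M * (t - a) / t) + ∫ t in c..b, M * (b - t) / t :=
    (abs_add_le _ _).trans (add_le_add hb1 hb2)
  have hfinal : (1 / L) * ((∫ t in a..c, M * (t - a) / t) + ∫ t in c..b, M * (b - t) / t)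
      = M / L * ((b - a) / 2 * Real.log (b / a) - (a + b - 2 * c)) := by
    rw [hI1, hI2, Real.log_div hb.ne' ha.ne', hlogc]
    field_simp
    ring
  calc (1 / L) * |(∫ t in a..c, (f a - f t) / t) + ∫ t in c..b, (f b - f t) / t|
      ≤ (1 / L) * ((∫ t in a..c, M * (t - a) / t) + ∫ t in c..b, M * (b - t) / t) := by
        apply mul_le_mul_of_nonneg_left hsum (by positivity)
    _ = M / L * ((b - a) / 2 * Real.log (b / a) - (a + b - 2 * c)) := hfinal
end

section
/- Let 0 < a < b, M ≥ 0, and let f : [a,b] → ℝ be M-Lipschitz. Then | (1/2)[ (f(a) + f(b))/2 + f(√(ab)) ] - (1/(ln b - ln a)) ∫_a^b f(t)/t dt | ≤ M(b-a)/4. -/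
/-- Inequality (3.4): averaged midpoint–trapezoid inequality for `M`-Lipschitzian
functions. -/
theorem stmt_10 (a b M : ℝ) (ha : 0 < a) (hab : a < b) (hM : 0 ≤ M)
    (f : ℝ → ℝ)
    (hf : ∀ x ∈ Set.Icc a b, ∀ y ∈ Set.Icc a b, |f x - f y| ≤ M * |x - y|) :
    |(1 / 2) * ((f a + f b) / 2 + f (Real.sqrt (a * b)))
      - (1 / (Real.log b - Real.log a)) * ∫ t in a..b, f t / t|
    ≤ M * (b - a) / 4 := by
  set g := Real.sqrt (a * b) with hgdef
  have hb : 0 < b := ha.trans hab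
  have hg0 : 0 < g := Real.sqrt_pos.2 (by positivity)
  have hag : a < g := by
    have h1 : a = Real.sqrt (a * a) := (Real.sqrt_mul_self ha.le).symm
    rw [h1, hgdef]
    exact Real.sqrt_lt_sqrt (by positivity) (by nlinarith)
  have hgb : g < b := by
    have h1 : b = Real.sqrt (b * b) := (Real.sqrt_mul_self hb.le).symm
    rw [h1, hgdef]
    exact Real.sqrt_lt_sqrt (by positivity) (by nlinarith)
  set L := Real.log b - Real.log a with hLdef
  have hLpos : 0 < L := sub_pos.2 (Real.log_lt_log ha hab)
  have hlogg : Real.log g = (Real.log a + Real.log b) / 2 := by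
    rw [hgdef, Real.log_sqrt (by positivity), Real.log_mul (ne_of_gt ha) (ne_of_gt hb)]
  have hcont : ContinuousOn f (Set.Icc a b) := by
    have hlip : LipschitzOnWith (Real.toNNReal M) f (Set.Icc a b) := by
      rw [lipschitzOnWith_iff_dist_le_mul]
      intro x hx y hy
      simpa [Real.dist_eq, Real.coe_toNNReal M hM] using hf x hx y hy
    exact hlip.continuousOn
  -- integrability helpers
  have hsubcont : ∀ (c : ℝ), ContinuousOn (fun t => (c - f t) / t) (Set.Icc a b) := by
    intro c
    exact (continuousOn_const.sub hcont).div continuousOn_id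
      (fun t ht => ne_of_gt (lt_of_lt_of_le ha ht.1))
  have hfdivcont : ContinuousOn (fun t => f t / t) (Set.Icc a b) := by
    exact hcont.div continuousOn_id (fun t ht => ne_of_gt (lt_of_lt_of_le ha ht.1))
  have hIcc1 : Set.uIcc a g ⊆ Set.Icc a b := by
    rw [Set.uIcc_of_le hag.le]; exact Set.Icc_subset_Icc le_rfl hgb.le
  have hIcc2 : Set.uIcc g b ⊆ Set.Icc a b := by
    rw [Set.uIcc_of_le hgb.le]; exact Set.Icc_subset_Icc hag.le le_rfl
  have hIcc3 : Set.uIcc a b ⊆ Set.Icc a b := by rw [Set.uIcc_of_le hab.le]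
  -- integrals of 1/t
  have hone : ∀ u v : ℝ, 0 < u → 0 < v → (∫ t in u..v, 1 / t) = Real.log v - Real.log u := by
    intro u v hu hv
    rw [integral_one_div, Real.log_div (ne_of_gt hv) (ne_of_gt hu)]
    intro h
    rcases Set.mem_uIcc.1 h with h1 | h1 <;> linarith [h1.1, h1.2]
  -- key decomposition
  set c1 := (f a + f g) / 2 with hc1
  set c2 := (f g + f b) / 2 with hc2
  have hi1 : IntervalIntegrable (fun t => (c1 - f t) / t) MeasureTheory.volume a g :=
    ((hsubcont c1).mono hIcc1).intervalIntegrable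
  have hi2 : IntervalIntegrable (fun t => (c2 - f t) / t) MeasureTheory.volume g b :=
    ((hsubcont c2).mono hIcc2).intervalIntegrable
  have hif1 : IntervalIntegrable (fun t => f t / t) MeasureTheory.volume a g :=
    (hfdivcont.mono hIcc1).intervalIntegrable
  have hif2 : IntervalIntegrable (fun t => f t / t) MeasureTheory.volume g b :=
    (hfdivcont.mono hIcc2).intervalIntegrable
  have hio1 : IntervalIntegrable (fun t => c1 * (1 / t)) MeasureTheory.volume a g := by
    apply ContinuousOn.intervalIntegrable
    exact (continuousOn_const.mul ((continuousOn_const.div continuousOn_id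
      (fun t ht => ne_of_gt (lt_of_lt_of_le ha (hIcc1 ht).1)))))
  have hio2 : IntervalIntegrable (fun t => c2 * (1 / t)) MeasureTheory.volume g b := by
    apply ContinuousOn.intervalIntegrable
    exact (continuousOn_const.mul ((continuousOn_const.div continuousOn_id
      (fun t ht => ne_of_gt (lt_of_lt_of_le ha (hIcc2 ht).1)))))
  have hsplit1 : (∫ t in a..g, (c1 - f t) / t)
      = c1 * (Real.log g - Real.log a) - ∫ t in a..g, f t / t := by
    have : (fun t : ℝ => (c1 - f t) / t) = fun t => c1 * (1 / t) - f t / t := by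
      funext t; by_cases ht : t = 0
      · simp [ht]
      · field_simp
    rw [this, intervalIntegral.integral_sub hio1 hif1,
      intervalIntegral.integral_const_mul, hone a g ha hg0]
  have hsplit2 : (∫ t in g..b, (c2 - f t) / t)
      = c2 * (Real.log b - Real.log g) - ∫ t in g..b, f t / t := by
    have : (fun t : ℝ => (c2 - f t) / t) = fun t => c2 * (1 / t) - f t / t := by
      funext t; by_cases ht : t = 0
      · simp [ht]
      · field_simp
    rw [this, intervalIntegral.integral_sub hio2 hif2,
      intervalIntegral.integral_const_mul, hone g b hg0 hb]
  have hsplitf : (∫ t in a..b, f t / t)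
      = (∫ t in a..g, f t / t) + ∫ t in g..b, f t / t :=
    (intervalIntegral.integral_add_adjacent_intervals hif1 hif2).symm
  have hhalf1 : Real.log g - Real.log a = L / 2 := by rw [hlogg, hLdef]; ring
  have hhalf2 : Real.log b - Real.log g = L / 2 := by rw [hlogg, hLdef]; ring
  have key : (1 / 2) * ((f a + f b) / 2 + f g)
      - (1 / L) * ∫ t in a..b, f t / t
      = (1 / L) * ((∫ t in a..g, (c1 - f t) / t) + ∫ t in g..b, (c2 - f t) / t) := by
    rw [hsplit1, hsplit2, hsplitf, hhalf1, hhalf2]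
    field_simp [hc1, hc2]
    ring
  -- pointwise bounds
  have hbound : ∀ (c C u v : ℝ), a ≤ u → u < v → v ≤ b → 0 ≤ C →
      (∀ t ∈ Set.Icc u v, |c - f t| ≤ C) →
      |∫ t in u..v, (c - f t) / t| ≤ C * (Real.log v - Real.log u) := by
    intro c C u v hau huv hvb hC hptw
    have hu0 : 0 < u := lt_of_lt_of_le ha hau
    have hsub : Set.uIcc u v ⊆ Set.Icc a b := by
      rw [Set.uIcc_of_le huv.le]; exact Set.Icc_subset_Icc hau hvb
    have hiA : IntervalIntegrable (fun t => (c - f t) / t) MeasureTheory.volume u v :=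
      ((hsubcont c).mono hsub).intervalIntegrable
    have hiB : IntervalIntegrable (fun t => C * (1 / t)) MeasureTheory.volume u v := by
      apply ContinuousOn.intervalIntegrable
      exact continuousOn_const.mul (continuousOn_const.div continuousOn_id
        (fun t ht => ne_of_gt (lt_of_lt_of_le ha (hsub ht).1)))
    calc |∫ t in u..v, (c - f t) / t|
        ≤ ∫ t in u..v, |(c - f t) / t| :=
          intervalIntegral.abs_integral_le_integral_abs huv.le
      _ ≤ ∫ t in u..v, C * (1 / t) := by
          apply intervalIntegral.integral_mono_on huv.le hiA.abs hiB
          intro t ht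
          have ht0 : 0 < t := lt_of_lt_of_le ha (le_trans hau ht.1)
          rw [abs_div, abs_of_pos ht0]
          rw [div_le_iff₀ ht0] at *
          calc |c - f t| ≤ C := hptw t ht
            _ = C * (1 / t) * t := by field_simp
      _ = C * (Real.log v - Real.log u) := by
          rw [intervalIntegral.integral_const_mul, hone u v hu0 (hu0.trans huv)]
  have hmemg : g ∈ Set.Icc a b := ⟨hag.le, hgb.le⟩
  have hmema : a ∈ Set.Icc a b := ⟨le_rfl, hab.le⟩
  have hmemb : b ∈ Set.Icc a b := ⟨hab.le, le_rfl⟩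
  have hb1 : |∫ t in a..g, (c1 - f t) / t| ≤ (M * (g - a) / 2) * (L / 2) := by
    rw [← hhalf1]
    apply hbound c1 (M * (g - a) / 2) a g le_rfl hag hgb.le (by nlinarith)
    intro t ht
    have htmem : t ∈ Set.Icc a b := ⟨ht.1, le_trans ht.2 hgb.le⟩
    have h1 := hf a hmema t htmem
    have h2 := hf g hmemg t htmem
    have e1 : |a - t| = t - a := by rw [abs_sub_comm]; exact abs_of_nonneg (by linarith [ht.1])
    have e2 : |g - t| = g - t := abs_of_nonneg (by linarith [ht.2])
    rw [e1] at h1; rw [e2] at h2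
    have : c1 - f t = ((f a - f t) + (f g - f t)) / 2 := by rw [hc1]; ring
    rw [this]
    calc |((f a - f t) + (f g - f t)) / 2| ≤ (|f a - f t| + |f g - f t|) / 2 := by
          rw [abs_div]; simp only [abs_two]
          exact div_le_div_of_nonneg_right (abs_add_le _ _) (by norm_num) |>.trans_eq rfl
      _ ≤ (M * (t - a) + M * (g - t)) / 2 := by linarith
      _ = M * (g - a) / 2 := by ring
  have hb2 : |∫ t in g..b, (c2 - f t) / t| ≤ (M * (b - g) / 2) * (L / 2) := by
    rw [← hhalf2]
    apply hbound c2 (M * (b - g) / 2) g b hag.le hgb le_rfl (by nlinarith)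
    intro t ht
    have htmem : t ∈ Set.Icc a b := ⟨le_trans hag.le ht.1, ht.2⟩
    have h1 := hf g hmemg t htmem
    have h2 := hf b hmemb t htmem
    have e1 : |g - t| = t - g := by rw [abs_sub_comm]; exact abs_of_nonneg (by linarith [ht.1])
    have e2 : |b - t| = b - t := abs_of_nonneg (by linarith [ht.2])
    rw [e1] at h1; rw [e2] at h2
    have : c2 - f t = ((f g - f t) + (f b - f t)) / 2 := by rw [hc2]; ring
    rw [this]
    calc |((f g - f t) + (f b - f t)) / 2| ≤ (|f g - f t| + |f b - f t|) / 2 := by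
          rw [abs_div]; simp only [abs_two]
          exact div_le_div_of_nonneg_right (abs_add_le _ _) (by norm_num) |>.trans_eq rfl
      _ ≤ (M * (t - g) + M * (b - t)) / 2 := by linarith
      _ = M * (b - g) / 2 := by ring
  rw [key, abs_mul, abs_of_pos (by positivity : (0:ℝ) < 1 / L)]
  have habs : |(∫ t in a..g, (c1 - f t) / t) + ∫ t in g..b, (c2 - f t) / t|
      ≤ (M * (g - a) / 2) * (L / 2) + (M * (b - g) / 2) * (L / 2) :=
    (abs_add_le _ _).trans (add_le_add hb1 hb2)
  calc (1 / L) * |(∫ t in a..g, (c1 - f t) / t) + ∫ t in g..b, (c2 - f t) / t|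
      ≤ (1 / L) * ((M * (g - a) / 2) * (L / 2) + (M * (b - g) / 2) * (L / 2)) :=
        mul_le_mul_of_nonneg_left habs (by positivity)
    _ = M * (b - a) / 4 := by field_simp; ring
end

section
/- Let 0 < a < b, M ≥ 0, and let f : [a,b] → ℝ be M-Lipschitz. Then for all x ∈ [a,b] and λ ∈ [0,1], | (1-λ) f(x) + λ [f(a) ln(x/a) + f(b) ln(b/x)]/(ln b - ln a) - (1/(ln b - ln a)) ∫_a^b f(t)/t dt | ≤ [M/(ln b - ln a)] { [(1-λ)x - λa] ln(x/a) + [λb - (1-λ)x] ln(b/x) + (1-2λ)(a + b - 2x) }. -/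
open intervalIntegral MeasureTheory

/-- Auxiliary: integral of `c + d/t` over `[p,q] ⊆ (0,∞)`. -/
lemma aux_int_cd (p q c d : ℝ) (hp : 0 < p) (hpq : p ≤ q) :
    ∫ t in p..q, (c + d * t⁻¹) = c * (q - p) + d * Real.log (q / p) := by
  have h0 : (0:ℝ) ∉ Set.uIcc p q := by
    rw [Set.uIcc_of_le hpq]
    intro h
    exact absurd h.1 (not_le.mpr hp)
  have hinv : IntervalIntegrable (fun t : ℝ => t⁻¹) volume p q := by
    refine intervalIntegrable_inv ?_ continuousOn_id
    intro t ht h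
    exact h0 (h ▸ ht)
  rw [intervalIntegral.integral_add intervalIntegrable_const (hinv.const_mul d),
    intervalIntegral.integral_const, intervalIntegral.integral_const_mul,
    integral_inv h0]
  simp only [smul_eq_mul]
  ring

/-- α = 1 case of Theorem 2.1: general weighted inequality for `M`-Lipschitzian
functions. -/
theorem stmt_11 (a b M : ℝ) (ha : 0 < a) (hab : a < b) (hM : 0 ≤ M)
    (f : ℝ → ℝ)
    (hf : ∀ x ∈ Set.Icc a b, ∀ y ∈ Set.Icc a b, |f x - f y| ≤ M * |x - y|)
    (x : ℝ) (hx : x ∈ Set.Icc a b) (lam : ℝ) (hlam : lam ∈ Set.Icc (0 : ℝ) 1) :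
    |(1 - lam) * f x
      + lam * ((f a * Real.log (x / a) + f b * Real.log (b / x)) / (Real.log b - Real.log a))
      - (1 / (Real.log b - Real.log a)) * ∫ t in a..b, f t / t|
    ≤ M / (Real.log b - Real.log a) *
        (((1 - lam) * x - lam * a) * Real.log (x / a)
          + (lam * b - (1 - lam) * x) * Real.log (b / x)
          + (1 - 2 * lam) * (a + b - 2 * x)) := by
  obtain ⟨hax, hxb⟩ := hx
  obtain ⟨hl0, hl1⟩ := hlam
  have hb : 0 < b := ha.trans hab
  have hx0 : 0 < x := lt_of_lt_of_le ha hax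
  have hL : 0 < Real.log b - Real.log a := sub_pos.mpr (Real.log_lt_log ha hab)
  set L := Real.log b - Real.log a with hLdef
  set P := Real.log (x / a) with hPdef
  set Q := Real.log (b / x) with hQdef
  have hLsplit : P + Q = L := by
    rw [hPdef, hQdef, Real.log_div (ne_of_gt hx0) (ne_of_gt ha),
      Real.log_div (ne_of_gt hb) (ne_of_gt hx0), hLdef]
    ring
  -- continuity of f on [a,b]
  have hfc : ContinuousOn f (Set.Icc a b) := by
    have hlip : LipschitzOnWith (Real.toNNReal M) f (Set.Icc a b) := by
      rw [lipschitzOnWith_iff_dist_le_mul]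
      intro u hu v hv
      rw [Real.dist_eq, Real.dist_eq, Real.coe_toNNReal M hM]
      exact hf u hu v hv
    exact hlip.continuousOn
  -- integrability helper
  have key : ∀ (g : ℝ → ℝ), ContinuousOn g (Set.Icc a b) → ∀ p q : ℝ, a ≤ p → q ≤ b → p ≤ q →
      IntervalIntegrable (fun t => g t / t) volume p q := by
    intro g hg p q hp hq hpq
    apply ContinuousOn.intervalIntegrable
    rw [Set.uIcc_of_le hpq]
    apply ContinuousOn.div
    · exact hg.mono (Set.Icc_subset_Icc hp hq)
    · exact continuousOn_id
    · intro t ht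
      exact ne_of_gt (lt_of_lt_of_le ha (hp.trans ht.1))
  set c1 : ℝ := (1 - lam) * f x + lam * f a with hc1def
  set c2 : ℝ := (1 - lam) * f x + lam * f b with hc2def
  have hcont1 : ContinuousOn (fun t => c1 - f t) (Set.Icc a b) :=
    continuousOn_const.sub hfc
  have hcont2 : ContinuousOn (fun t => c2 - f t) (Set.Icc a b) :=
    continuousOn_const.sub hfc
  have hint1 : IntervalIntegrable (fun t => (c1 - f t) / t) volume a x :=
    key _ hcont1 a x le_rfl hxb hax
  have hint2 : IntervalIntegrable (fun t => (c2 - f t) / t) volume x b :=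
    key _ hcont2 x b hax le_rfl hxb
  have hintf1 : IntervalIntegrable (fun t => f t / t) volume a x :=
    key f hfc a x le_rfl hxb hax
  have hintf2 : IntervalIntegrable (fun t => f t / t) volume x b :=
    key f hfc x b hax le_rfl hxb
  have h0ax : (0:ℝ) ∉ Set.uIcc a x := by
    rw [Set.uIcc_of_le hax]; intro h; exact absurd h.1 (not_le.mpr ha)
  have h0xb : (0:ℝ) ∉ Set.uIcc x b := by
    rw [Set.uIcc_of_le hxb]; intro h; exact absurd h.1 (not_le.mpr hx0)
  have hinvax : IntervalIntegrable (fun t : ℝ => t⁻¹) volume a x := by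
    refine intervalIntegrable_inv ?_ continuousOn_id
    intro t ht h; exact h0ax (h ▸ ht)
  have hinvxb : IntervalIntegrable (fun t : ℝ => t⁻¹) volume x b := by
    refine intervalIntegrable_inv ?_ continuousOn_id
    intro t ht h; exact h0xb (h ▸ ht)
  -- value of the two kernel integrals
  have hI1 : ∫ t in a..x, (c1 - f t) / t = c1 * P - ∫ t in a..x, f t / t := by
    have heq : (fun t => (c1 - f t) / t) = fun t => c1 * t⁻¹ - f t / t := by
      funext t; rw [sub_div, div_eq_mul_inv]
    rw [heq, intervalIntegral.integral_sub (hinvax.const_mul c1) hintf1,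
      intervalIntegral.integral_const_mul, integral_inv h0ax]
  have hI2 : ∫ t in x..b, (c2 - f t) / t = c2 * Q - ∫ t in x..b, f t / t := by
    have heq : (fun t => (c2 - f t) / t) = fun t => c2 * t⁻¹ - f t / t := by
      funext t; rw [sub_div, div_eq_mul_inv]
    rw [heq, intervalIntegral.integral_sub (hinvxb.const_mul c2) hintf2,
      intervalIntegral.integral_const_mul, integral_inv h0xb]
  -- main identity
  have main : (1 - lam) * f x + lam * ((f a * P + f b * Q) / L)
      - (1 / L) * ∫ t in a..b, f t / t
      = (1 / L) * ((∫ t in a..x, (c1 - f t) / t) + ∫ t in x..b, (c2 - f t) / t) := by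
    rw [hI1, hI2, ← intervalIntegral.integral_add_adjacent_intervals hintf1 hintf2,
      ← hLsplit, hc1def, hc2def]
    have hPQ : P + Q ≠ 0 := by rw [hLsplit]; exact ne_of_gt hL
    field_simp
    ring
  -- pointwise bounds
  have hbd1 : ∀ t ∈ Set.Icc a x, |(c1 - f t) / t| ≤ M * (2 * lam - 1) + (M * ((1 - lam) * x - lam * a)) * t⁻¹ := by
    intro t ht
    have ht0 : 0 < t := lt_of_lt_of_le ha ht.1
    have htb : t ∈ Set.Icc a b := ⟨ht.1, ht.2.trans hxb⟩
    have h1 : |f x - f t| ≤ M * (x - t) := by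
      have := hf x ⟨hax, hxb⟩ t htb
      rwa [abs_of_nonneg (sub_nonneg.mpr ht.2)] at this
    have h2 : |f a - f t| ≤ M * (t - a) := by
      have := hf a ⟨le_rfl, le_of_lt hab⟩ t htb
      rwa [abs_of_nonpos (sub_nonpos.mpr ht.1), neg_sub] at this
    have hnum : |c1 - f t| ≤ M * ((1 - lam) * (x - t) + lam * (t - a)) := by
      have heq : c1 - f t = (1 - lam) * (f x - f t) + lam * (f a - f t) := by
        rw [hc1def]; ring
      calc |c1 - f t| ≤ (1 - lam) * |f x - f t| + lam * |f a - f t| := by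
            rw [heq]
            refine (abs_add_le _ _).trans ?_
            rw [abs_mul, abs_mul, abs_of_nonneg (by linarith), abs_of_nonneg hl0]
        _ ≤ (1 - lam) * (M * (x - t)) + lam * (M * (t - a)) := by
            gcongr <;> linarith
        _ = M * ((1 - lam) * (x - t) + lam * (t - a)) := by ring
    have hrw : M * (2 * lam - 1) + (M * ((1 - lam) * x - lam * a)) * t⁻¹
        = M * ((1 - lam) * (x - t) + lam * (t - a)) / t := by
      field_simp
      ring
    rw [hrw, abs_div, abs_of_pos ht0]
    gcongr
  have hbd2 : ∀ t ∈ Set.Icc x b, |(c2 - f t) / t| ≤ M * (1 - 2 * lam) + (M * (lam * b - (1 - lam) * x)) * t⁻¹ := by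
    intro t ht
    have ht0 : 0 < t := lt_of_lt_of_le hx0 ht.1
    have htb : t ∈ Set.Icc a b := ⟨hax.trans ht.1, ht.2⟩
    have h1 : |f x - f t| ≤ M * (t - x) := by
      have := hf x ⟨hax, hxb⟩ t htb
      rwa [abs_of_nonpos (sub_nonpos.mpr ht.1), neg_sub] at this
    have h2 : |f b - f t| ≤ M * (b - t) := by
      have := hf b ⟨le_of_lt hab, le_rfl⟩ t htb
      rwa [abs_of_nonneg (sub_nonneg.mpr ht.2)] at this
    have hnum : |c2 - f t| ≤ M * ((1 - lam) * (t - x) + lam * (b - t)) := by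
      have heq : c2 - f t = (1 - lam) * (f x - f t) + lam * (f b - f t) := by
        rw [hc2def]; ring
      calc |c2 - f t| ≤ (1 - lam) * |f x - f t| + lam * |f b - f t| := by
            rw [heq]
            refine (abs_add_le _ _).trans ?_
            rw [abs_mul, abs_mul, abs_of_nonneg (by linarith), abs_of_nonneg hl0]
        _ ≤ (1 - lam) * (M * (t - x)) + lam * (M * (b - t)) := by
            gcongr <;> linarith
        _ = M * ((1 - lam) * (t - x) + lam * (b - t)) := by ring
    have hrw : M * (1 - 2 * lam) + (M * (lam * b - (1 - lam) * x)) * t⁻¹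
        = M * ((1 - lam) * (t - x) + lam * (b - t)) / t := by
      field_simp
      ring
    rw [hrw, abs_div, abs_of_pos ht0]
    gcongr
  -- integrability of bounding functions
  have hB1int : IntervalIntegrable
      (fun t => M * (2 * lam - 1) + (M * ((1 - lam) * x - lam * a)) * t⁻¹) volume a x :=
    intervalIntegrable_const.add (hinvax.const_mul _)
  have hB2int : IntervalIntegrable
      (fun t => M * (1 - 2 * lam) + (M * (lam * b - (1 - lam) * x)) * t⁻¹) volume x b :=
    intervalIntegrable_const.add (hinvxb.const_mul _)
  -- bound the two kernel integrals
  have hJ1 : |∫ t in a..x, (c1 - f t) / t|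
      ≤ M * (2 * lam - 1) * (x - a) + M * ((1 - lam) * x - lam * a) * P := by
    calc |∫ t in a..x, (c1 - f t) / t| ≤ ∫ t in a..x, |(c1 - f t) / t| := by
          have h := intervalIntegral.norm_integral_le_integral_norm
            (f := fun t => (c1 - f t) / t) (μ := volume) hax
          simp only [Real.norm_eq_abs] at h
          exact h
      _ ≤ ∫ t in a..x, (M * (2 * lam - 1) + (M * ((1 - lam) * x - lam * a)) * t⁻¹) :=
          intervalIntegral.integral_mono_on hax hint1.abs hB1int hbd1
      _ = M * (2 * lam - 1) * (x - a) + M * ((1 - lam) * x - lam * a) * P := by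
          rw [aux_int_cd a x _ _ ha hax]
  have hJ2 : |∫ t in x..b, (c2 - f t) / t|
      ≤ M * (1 - 2 * lam) * (b - x) + M * (lam * b - (1 - lam) * x) * Q := by
    calc |∫ t in x..b, (c2 - f t) / t| ≤ ∫ t in x..b, |(c2 - f t) / t| := by
          have h := intervalIntegral.norm_integral_le_integral_norm
            (f := fun t => (c2 - f t) / t) (μ := volume) hxb
          simp only [Real.norm_eq_abs] at h
          exact h
      _ ≤ ∫ t in x..b, (M * (1 - 2 * lam) + (M * (lam * b - (1 - lam) * x)) * t⁻¹) :=
          intervalIntegral.integral_mono_on hxb hint2.abs hB2int hbd2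
      _ = M * (1 - 2 * lam) * (b - x) + M * (lam * b - (1 - lam) * x) * Q := by
          rw [aux_int_cd x b _ _ hx0 hxb]
  calc |(1 - lam) * f x + lam * ((f a * P + f b * Q) / L) - (1 / L) * ∫ t in a..b, f t / t|
      = (1 / L) * |(∫ t in a..x, (c1 - f t) / t) + ∫ t in x..b, (c2 - f t) / t| := by
        rw [main, abs_mul, abs_of_pos (by positivity : (0:ℝ) < 1 / L)]
    _ ≤ (1 / L) * (|∫ t in a..x, (c1 - f t) / t| + |∫ t in x..b, (c2 - f t) / t|) := by
        gcongr
        exact abs_add_le _ _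
    _ ≤ (1 / L) * ((M * (2 * lam - 1) * (x - a) + M * ((1 - lam) * x - lam * a) * P)
          + (M * (1 - 2 * lam) * (b - x) + M * (lam * b - (1 - lam) * x) * Q)) := by
        gcongr
    _ = M / L * (((1 - lam) * x - lam * a) * P + (lam * b - (1 - lam) * x) * Q
          + (1 - 2 * lam) * (a + b - 2 * x)) := by
        ring
end

section
/- Let 0 < a < b, M ≥ 0, and let f : [a,b] → ℝ be M-Lipschitz. Then for all λ ∈ [0,1], | (1-λ) f(√(ab)) + λ (f(a) + f(b))/2 - (1/(ln b - ln a)) ∫_a^b f(t)/t dt | ≤ [M/(ln b - ln a)] [ (λ(b-a)/2) ln(b/a) + (1-2λ)(a + b - 2√(ab)) ]. -/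
open intervalIntegral Set

set_option maxHeartbeats 1600000 in
/-- Inequality (3.5): general weighted inequality at x = √(ab) for `M`-Lipschitzian
functions. -/
theorem stmt_12 (a b M : ℝ) (ha : 0 < a) (hab : a < b) (hM : 0 ≤ M)
    (f : ℝ → ℝ)
    (hf : ∀ x ∈ Set.Icc a b, ∀ y ∈ Set.Icc a b, |f x - f y| ≤ M * |x - y|)
    (lam : ℝ) (hlam : lam ∈ Set.Icc (0 : ℝ) 1) :
    |(1 - lam) * f (Real.sqrt (a * b)) + lam * ((f a + f b) / 2)
      - (1 / (Real.log b - Real.log a)) * ∫ t in a..b, f t / t|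
    ≤ M / (Real.log b - Real.log a) *
        (lam * (b - a) / 2 * Real.log (b / a)
          + (1 - 2 * lam) * (a + b - 2 * Real.sqrt (a * b))) := by
  obtain ⟨hl0, hl1⟩ := hlam
  have hb : 0 < b := ha.trans hab
  set s := Real.sqrt (a * b) with hs_def
  have has : a < s := by
    rw [hs_def]
    nth_rewrite 1 [← Real.sqrt_mul_self ha.le]
    exact Real.sqrt_lt_sqrt (by positivity) (by nlinarith)
  have hsb : s < b := by
    rw [hs_def]
    nth_rewrite 2 [← Real.sqrt_mul_self hb.le]
    exact Real.sqrt_lt_sqrt (by positivity) (by nlinarith)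
  have hs0 : 0 < s := ha.trans has
  set L := Real.log b - Real.log a with hL_def
  have hL : 0 < L := sub_pos.2 (Real.log_lt_log ha hab)
  have hlogs : Real.log s = (Real.log a + Real.log b) / 2 := by
    rw [hs_def, Real.log_sqrt (by positivity), Real.log_mul ha.ne' hb.ne']
  have h1 : Real.log s - Real.log a = L / 2 := by rw [hlogs, hL_def]; ring
  have h2 : Real.log b - Real.log s = L / 2 := by rw [hlogs, hL_def]; ring
  -- continuity of f on [a,b]
  have hfc : ContinuousOn f (Icc a b) := by
    apply LipschitzOnWith.continuousOn (K := M.toNNReal)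
    apply LipschitzOnWith.of_dist_le'
    intro x hx y hy
    rw [Real.dist_eq, Real.dist_eq]
    exact hf x hx y hy
  -- continuity of f t / t on [a,b]
  have hfc' : ContinuousOn (fun t => f t / t) (Icc a b) :=
    hfc.div continuousOn_id (fun t ht => ne_of_gt (lt_of_lt_of_le ha ht.1))
  have hsub1 : Icc a s ⊆ Icc a b := Icc_subset_Icc le_rfl hsb.le
  have hsub2 : Icc s b ⊆ Icc a b := Icc_subset_Icc has.le le_rfl
  have hint1 : IntervalIntegrable (fun t => f t / t) MeasureTheory.volume a s := by
    apply ContinuousOn.intervalIntegrable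
    rw [uIcc_of_le has.le]; exact hfc'.mono hsub1
  have hint2 : IntervalIntegrable (fun t => f t / t) MeasureTheory.volume s b := by
    apply ContinuousOn.intervalIntegrable
    rw [uIcc_of_le hsb.le]; exact hfc'.mono hsub2
  -- basic integral: ∫ c/t + d
  have key : ∀ c d u v : ℝ, 0 < u → u ≤ v →
      (∫ t in u..v, (c / t + d)) = c * (Real.log v - Real.log u) + d * (v - u) := by
    intro c d u v hu huv
    have hv : 0 < v := lt_of_lt_of_le hu huv
    have h0 : (0:ℝ) ∉ Set.uIcc u v := by
      rw [Set.uIcc_of_le huv]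
      intro h; exact absurd h.1 (not_le.2 hu)
    have hinv : IntervalIntegrable (fun t : ℝ => c / t) MeasureTheory.volume u v := by
      apply ContinuousOn.intervalIntegrable
      exact ContinuousOn.div continuousOn_const continuousOn_id (fun t ht => by
        intro h; exact h0 (h ▸ ht))
    rw [intervalIntegral.integral_add hinv (intervalIntegrable_const)]
    rw [intervalIntegral.integral_const]
    have hcv : (∫ t in u..v, c / t) = c * Real.log (v / u) := by
      simp_rw [div_eq_mul_inv]
      rw [intervalIntegral.integral_const_mul, integral_inv h0, div_eq_mul_inv]
    rw [hcv, Real.log_div hv.ne' hu.ne', smul_eq_mul]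
    ring
  -- integrals of constants over t
  have hconstint : ∀ c u v : ℝ, 0 < u → u ≤ v →
      IntervalIntegrable (fun t : ℝ => c / t) MeasureTheory.volume u v := by
    intro c u v hu huv
    apply ContinuousOn.intervalIntegrable
    apply ContinuousOn.div continuousOn_const continuousOn_id
    intro t ht
    rw [uIcc_of_le huv] at ht
    exact ne_of_gt (lt_of_lt_of_le hu ht.1)
  -- the two pieces
  set J1 := ∫ t in a..s, ((1 - lam) * f s + lam * f a - f t) / t with hJ1
  set J2 := ∫ t in s..b, ((1 - lam) * f s + lam * f b - f t) / t with hJ2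
  -- identity
  have e1 : J1 = ((1 - lam) * f s + lam * f a) * (L / 2) - ∫ t in a..s, f t / t := by
    rw [hJ1]
    have : ∀ t : ℝ, ((1 - lam) * f s + lam * f a - f t) / t
        = ((1 - lam) * f s + lam * f a) / t - f t / t := fun t => by ring
    simp_rw [this]
    rw [intervalIntegral.integral_sub (hconstint _ _ _ ha has.le) hint1]
    have := key ((1 - lam) * f s + lam * f a) 0 a s ha has.le
    simp only [add_zero, zero_mul] at this
    simp_rw [this, h1]
  have e2 : J2 = ((1 - lam) * f s + lam * f b) * (L / 2) - ∫ t in s..b, f t / t := by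
    rw [hJ2]
    have : ∀ t : ℝ, ((1 - lam) * f s + lam * f b - f t) / t
        = ((1 - lam) * f s + lam * f b) / t - f t / t := fun t => by ring
    simp_rw [this]
    rw [intervalIntegral.integral_sub (hconstint _ _ _ hs0 hsb.le) hint2]
    have := key ((1 - lam) * f s + lam * f b) 0 s b hs0 hsb.le
    simp only [add_zero, zero_mul] at this
    simp_rw [this, h2]
  have hsplit : (∫ t in a..b, f t / t) = (∫ t in a..s, f t / t) + ∫ t in s..b, f t / t :=
    (intervalIntegral.integral_add_adjacent_intervals hint1 hint2).symm
  have hiden : (1 - lam) * f s + lam * ((f a + f b) / 2)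
      - (1 / L) * ∫ t in a..b, f t / t = (1 / L) * (J1 + J2) := by
    rw [hsplit, e1, e2]
    field_simp
    ring
  rw [hiden]
  -- bound J1
  have hb1 : |J1| ≤ ∫ t in a..s, (M * ((1 - lam) * (s - t) + lam * (t - a))) / t := by
    rw [hJ1, ← Real.norm_eq_abs]
    have hle : ∀ᵐ t ∂MeasureTheory.volume.restrict (Set.uIoc a s),
        ‖((1 - lam) * f s + lam * f a - f t) / t‖
          ≤ (M * ((1 - lam) * (s - t) + lam * (t - a))) / t := by
      apply MeasureTheory.ae_restrict_of_forall_mem measurableSet_uIoc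
      intro t ht
      rw [uIoc_of_le has.le] at ht
      have hta : a < t := ht.1
      have hts : t ≤ s := ht.2
      have ht0 : 0 < t := ha.trans hta
      have htm : t ∈ Icc a b := ⟨hta.le, hts.trans hsb.le⟩
      have hsm : s ∈ Icc a b := ⟨has.le, hsb.le⟩
      have ham : a ∈ Icc a b := ⟨le_rfl, hab.le⟩
      rw [Real.norm_eq_abs, abs_div, abs_of_pos ht0]
      apply div_le_div_of_nonneg_right _ ht0.le
      calc |(1 - lam) * f s + lam * f a - f t|
          = |(1 - lam) * (f s - f t) + lam * (f a - f t)| := by ring_nf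
        _ ≤ |(1 - lam) * (f s - f t)| + |lam * (f a - f t)| := abs_add_le _ _
        _ = (1 - lam) * |f s - f t| + lam * |f a - f t| := by
            rw [abs_mul, abs_mul, abs_of_nonneg (by linarith), abs_of_nonneg hl0]
        _ ≤ (1 - lam) * (M * |s - t|) + lam * (M * |a - t|) := by
            gcongr
            · exact hf s hsm t htm
            · exact hf a ham t htm
        _ = M * ((1 - lam) * (s - t) + lam * (t - a)) := by
            rw [abs_of_nonneg (by linarith), abs_of_nonpos (by linarith)]
            ring
    have hgint : IntervalIntegrable
        (fun t => (M * ((1 - lam) * (s - t) + lam * (t - a))) / t)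
        MeasureTheory.volume a s := by
      apply ContinuousOn.intervalIntegrable
      apply ContinuousOn.div (by fun_prop) continuousOn_id
      intro t ht
      rw [uIcc_of_le has.le] at ht
      exact ne_of_gt (lt_of_lt_of_le ha ht.1)
    calc ‖∫ t in a..s, ((1 - lam) * f s + lam * f a - f t) / t‖
        ≤ |∫ t in a..s, (M * ((1 - lam) * (s - t) + lam * (t - a))) / t| :=
          intervalIntegral.norm_integral_le_abs_of_norm_le hle hgint
      _ = ∫ t in a..s, (M * ((1 - lam) * (s - t) + lam * (t - a))) / t := by
          apply abs_of_nonneg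
          apply intervalIntegral.integral_nonneg has.le
          intro t ht
          have ht0 : 0 < t := lt_of_lt_of_le ha ht.1
          apply div_nonneg _ ht0.le
          have hx1 : a ≤ t := ht.1
          have hx2 : t ≤ s := ht.2
          have hp1 : (0:ℝ) ≤ (1 - lam) * (s - t) := mul_nonneg (by linarith) (by linarith)
          have hp2 : (0:ℝ) ≤ lam * (t - a) := mul_nonneg hl0 (by linarith)
          nlinarith
  -- bound J2
  have hb2 : |J2| ≤ ∫ t in s..b, (M * ((1 - lam) * (t - s) + lam * (b - t))) / t := by
    rw [hJ2, ← Real.norm_eq_abs]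
    have hle : ∀ᵐ t ∂MeasureTheory.volume.restrict (Set.uIoc s b),
        ‖((1 - lam) * f s + lam * f b - f t) / t‖
          ≤ (M * ((1 - lam) * (t - s) + lam * (b - t))) / t := by
      apply MeasureTheory.ae_restrict_of_forall_mem measurableSet_uIoc
      intro t ht
      rw [uIoc_of_le hsb.le] at ht
      have hts : s < t := ht.1
      have htb : t ≤ b := ht.2
      have ht0 : 0 < t := hs0.trans hts
      have htm : t ∈ Icc a b := ⟨has.le.trans hts.le, htb⟩
      have hsm : s ∈ Icc a b := ⟨has.le, hsb.le⟩
      have hbm : b ∈ Icc a b := ⟨hab.le, le_rfl⟩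
      rw [Real.norm_eq_abs, abs_div, abs_of_pos ht0]
      apply div_le_div_of_nonneg_right _ ht0.le
      calc |(1 - lam) * f s + lam * f b - f t|
          = |(1 - lam) * (f s - f t) + lam * (f b - f t)| := by ring_nf
        _ ≤ |(1 - lam) * (f s - f t)| + |lam * (f b - f t)| := abs_add_le _ _
        _ = (1 - lam) * |f s - f t| + lam * |f b - f t| := by
            rw [abs_mul, abs_mul, abs_of_nonneg (by linarith), abs_of_nonneg hl0]
        _ ≤ (1 - lam) * (M * |s - t|) + lam * (M * |b - t|) := by
            gcongr
            · exact hf s hsm t htm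
            · exact hf b hbm t htm
        _ = M * ((1 - lam) * (t - s) + lam * (b - t)) := by
            rw [abs_of_nonpos (by linarith), abs_of_nonneg (by linarith)]
            ring
    have hgint : IntervalIntegrable
        (fun t => (M * ((1 - lam) * (t - s) + lam * (b - t))) / t)
        MeasureTheory.volume s b := by
      apply ContinuousOn.intervalIntegrable
      apply ContinuousOn.div (by fun_prop) continuousOn_id
      intro t ht
      rw [uIcc_of_le hsb.le] at ht
      exact ne_of_gt (lt_of_lt_of_le hs0 ht.1)
    calc ‖∫ t in s..b, ((1 - lam) * f s + lam * f b - f t) / t‖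
        ≤ |∫ t in s..b, (M * ((1 - lam) * (t - s) + lam * (b - t))) / t| :=
          intervalIntegral.norm_integral_le_abs_of_norm_le hle hgint
      _ = ∫ t in s..b, (M * ((1 - lam) * (t - s) + lam * (b - t))) / t := by
          apply abs_of_nonneg
          apply intervalIntegral.integral_nonneg hsb.le
          intro t ht
          have ht0 : 0 < t := lt_of_lt_of_le hs0 ht.1
          apply div_nonneg _ ht0.le
          have hx1 : s ≤ t := ht.1
          have hx2 : t ≤ b := ht.2
          have hp1 : (0:ℝ) ≤ (1 - lam) * (t - s) := mul_nonneg (by linarith) (by linarith)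
          have hp2 : (0:ℝ) ≤ lam * (b - t) := mul_nonneg hl0 (by linarith)
          nlinarith
  -- evaluate the bound integrals
  have v1 : (∫ t in a..s, (M * ((1 - lam) * (s - t) + lam * (t - a))) / t)
      = M * ((1 - lam) * s - lam * a) * (L / 2) + M * (2 * lam - 1) * (s - a) := by
    have hcong : EqOn (fun t => (M * ((1 - lam) * (s - t) + lam * (t - a))) / t)
        (fun t => (M * ((1 - lam) * s - lam * a)) / t + M * (2 * lam - 1)) (uIcc a s) := by
      intro t ht
      rw [uIcc_of_le has.le] at ht
      have ht0 : t ≠ 0 := ne_of_gt (lt_of_lt_of_le ha ht.1)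
      field_simp
      ring
    rw [intervalIntegral.integral_congr hcong, key _ _ _ _ ha has.le, h1]
  have v2 : (∫ t in s..b, (M * ((1 - lam) * (t - s) + lam * (b - t))) / t)
      = M * (lam * b - (1 - lam) * s) * (L / 2) + M * (1 - 2 * lam) * (b - s) := by
    have hcong : EqOn (fun t => (M * ((1 - lam) * (t - s) + lam * (b - t))) / t)
        (fun t => (M * (lam * b - (1 - lam) * s)) / t + M * (1 - 2 * lam)) (uIcc s b) := by
      intro t ht
      rw [uIcc_of_le hsb.le] at ht
      have ht0 : t ≠ 0 := ne_of_gt (lt_of_lt_of_le hs0 ht.1)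
      field_simp
      ring
    rw [intervalIntegral.integral_congr hcong, key _ _ _ _ hs0 hsb.le, h2]
  -- finish
  have hlog : Real.log (b / a) = L := Real.log_div hb.ne' ha.ne'
  rw [hlog]
  calc |1 / L * (J1 + J2)| = 1 / L * |J1 + J2| := by
        rw [abs_mul, abs_of_pos (by positivity)]
    _ ≤ 1 / L * (|J1| + |J2|) := by
        gcongr
        exact abs_add_le _ _
    _ ≤ 1 / L * ((M * ((1 - lam) * s - lam * a) * (L / 2) + M * (2 * lam - 1) * (s - a))
          + (M * (lam * b - (1 - lam) * s) * (L / 2) + M * (1 - 2 * lam) * (b - s))) := by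
        gcongr
        · rw [← v1]; exact hb1
        · rw [← v2]; exact hb2
    _ = M / L * (lam * (b - a) / 2 * L + (1 - 2 * lam) * (a + b - 2 * s)) := by
        field_simp
        ring
end

section
/- Let 0 < a < b, λ ∈ [0,1] and let n ≥ 1 be a real number. Then | (1-λ) G(a,b)^n + λ A(a^n, b^n) - L(a^n, b^n) | ≤ [n b^{n-1}/(ln b - ln a)] [ (λ(b-a)/2) ln(b/a) + 2(1-2λ)(A(a,b) - G(a,b)) ]. -/
open Real intervalIntegral

private lemma hasDeriv_aux (α β μ : ℝ) (hμ : μ ≠ 0) (t : ℝ) :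
    HasDerivAt (fun s : ℝ => ((α + β * s) / μ - β / μ ^ 2) * Real.exp (μ * s))
      ((α + β * t) * Real.exp (μ * t)) t := by
  have h1 : HasDerivAt (fun s : ℝ => (α + β * s) / μ - β / μ ^ 2) (β / μ) t := by
    simpa using (((hasDerivAt_id t).const_mul β).const_add α).div_const μ |>.sub_const (β / μ ^ 2)
  have h2 : HasDerivAt (fun s : ℝ => Real.exp (μ * s)) (Real.exp (μ * t) * μ) t := by
    exact ((Real.hasDerivAt_exp (μ * t)).comp t ((hasDerivAt_id t).const_mul μ)).congr_deriv (by simp)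
  have h := h1.mul h2
  refine h.congr_deriv ?_
  field_simp
  ring

private lemma integral_eval (α β μ A B : ℝ) (hμ : μ ≠ 0) :
    ∫ t in A..B, (α + β * t) * Real.exp (μ * t) =
      (((α + β * B) / μ - β / μ ^ 2) * Real.exp (μ * B))
        - (((α + β * A) / μ - β / μ ^ 2) * Real.exp (μ * A)) := by
  apply intervalIntegral.integral_eq_sub_of_hasDerivAt (fun t _ => hasDeriv_aux α β μ hμ t)
  exact (Continuous.mul (by continuity) (by continuity)).intervalIntegrable A B

private lemma eval_I1 (μ : ℝ) (hμ : μ ≠ 0) :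
    ∫ t in (1/2 : ℝ)..1, (1 - t) * Real.exp (μ * t)
      = Real.exp (μ/2) * (Real.exp (μ/2) - 1 - μ/2) / μ ^ 2 := by
  have h : ∫ t in (1/2 : ℝ)..1, (1 - t) * Real.exp (μ * t)
      = ∫ t in (1/2 : ℝ)..1, (1 + (-1) * t) * Real.exp (μ * t) :=
    intervalIntegral.integral_congr (fun t _ => by ring)
  rw [h, integral_eval 1 (-1) μ _ _ hμ]
  simp only [mul_one, mul_zero, Real.exp_zero, show μ * (1/2) = μ/2 from by ring]
  rw [show Real.exp μ = Real.exp (μ/2) * Real.exp (μ/2) from by rw [← Real.exp_add]; ring_nf]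
  field_simp
  ring

private lemma eval_I2 (μ : ℝ) (hμ : μ ≠ 0) :
    ∫ t in (0 : ℝ)..(1/2), t * Real.exp (μ * t)
      = ((μ/2 - 1) * Real.exp (μ/2) + 1) / μ ^ 2 := by
  have h : ∫ t in (0 : ℝ)..(1/2), t * Real.exp (μ * t)
      = ∫ t in (0 : ℝ)..(1/2), (0 + 1 * t) * Real.exp (μ * t) :=
    intervalIntegral.integral_congr (fun t _ => by ring)
  rw [h, integral_eval 0 1 μ _ _ hμ]
  simp only [mul_one, mul_zero, Real.exp_zero, show μ * (1/2) = μ/2 from by ring]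
  field_simp
  ring

private lemma eval_I3 (μ : ℝ) (hμ : μ ≠ 0) :
    ∫ t in (1/2 : ℝ)..1, (t - 1/2) * Real.exp (μ * t)
      = Real.exp (μ/2) * ((μ/2 - 1) * Real.exp (μ/2) + 1) / μ ^ 2 := by
  have h : ∫ t in (1/2 : ℝ)..1, (t - 1/2) * Real.exp (μ * t)
      = ∫ t in (1/2 : ℝ)..1, (-(1/2) + 1 * t) * Real.exp (μ * t) :=
    intervalIntegral.integral_congr (fun t _ => by ring)
  rw [h, integral_eval (-(1/2)) 1 μ _ _ hμ]
  simp only [mul_one, mul_zero, Real.exp_zero, show μ * (1/2) = μ/2 from by ring]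
  rw [show Real.exp μ = Real.exp (μ/2) * Real.exp (μ/2) from by rw [← Real.exp_add]; ring_nf]
  field_simp
  ring

private lemma eval_I4 (μ : ℝ) (hμ : μ ≠ 0) :
    ∫ t in (0 : ℝ)..(1/2), (1/2 - t) * Real.exp (μ * t)
      = (Real.exp (μ/2) - 1 - μ/2) / μ ^ 2 := by
  have h : ∫ t in (0 : ℝ)..(1/2), (1/2 - t) * Real.exp (μ * t)
      = ∫ t in (0 : ℝ)..(1/2), (1/2 + (-1) * t) * Real.exp (μ * t) :=
    intervalIntegral.integral_congr (fun t _ => by ring)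
  rw [h, integral_eval (1/2) (-1) μ _ _ hμ]
  simp only [mul_one, mul_zero, Real.exp_zero, show μ * (1/2) = μ/2 from by ring]
  field_simp
  ring

private lemma comp_I43 (μ : ℝ) (hμ : 0 ≤ μ) :
    (∫ t in (0:ℝ)..(1/2), (1/2 - t) * Real.exp (μ * t)) ≤
      ∫ t in (1/2:ℝ)..1, (t - 1/2) * Real.exp (μ * t) := by
  have h0 : (∫ t in (0:ℝ)..(1/2), (1/2 - t) * Real.exp (μ * t))
      = ∫ x in (1/2:ℝ)..1, (x - 1/2) * Real.exp (μ * (1 - x)) := by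
    calc (∫ t in (0:ℝ)..(1/2), (1/2 - t) * Real.exp (μ * t))
        = ∫ t in (0:ℝ)..(1/2), (fun x => (x - 1/2) * Real.exp (μ * (1 - x))) (1 - t) := by
          refine intervalIntegral.integral_congr fun t _ => ?_
          show (1/2 - t) * Real.exp (μ * t) = ((1 - t) - 1/2) * Real.exp (μ * (1 - (1 - t)))
          rw [show (1:ℝ) - (1 - t) = t by ring]; ring
      _ = ∫ x in (1-(1/2:ℝ))..(1-(0:ℝ)), (x - 1/2) * Real.exp (μ * (1 - x)) :=
          intervalIntegral.integral_comp_sub_left (fun x => (x - 1/2) * Real.exp (μ * (1 - x))) 1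
      _ = ∫ x in (1/2:ℝ)..1, (x - 1/2) * Real.exp (μ * (1 - x)) := by norm_num
  rw [h0]
  refine intervalIntegral.integral_mono_on (by norm_num)
    ((Continuous.mul (by continuity) (by continuity)).intervalIntegrable _ _)
    ((Continuous.mul (by continuity) (by continuity)).intervalIntegrable _ _)
    fun x hx => ?_
  refine mul_le_mul_of_nonneg_left (Real.exp_le_exp.2 ?_) (by linarith [hx.1])
  exact mul_le_mul_of_nonneg_left (by linarith [hx.1]) hμ

private lemma comp_I21 (μ : ℝ) (hμ : 0 ≤ μ) :
    (∫ t in (0:ℝ)..(1/2), t * Real.exp (μ * t)) ≤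
      ∫ t in (1/2:ℝ)..1, (1 - t) * Real.exp (μ * t) := by
  have h0 : (∫ t in (0:ℝ)..(1/2), t * Real.exp (μ * t))
      = ∫ x in (1/2:ℝ)..1, (1 - x) * Real.exp (μ * (1 - x)) := by
    calc (∫ t in (0:ℝ)..(1/2), t * Real.exp (μ * t))
        = ∫ t in (0:ℝ)..(1/2), (fun x => (1 - x) * Real.exp (μ * (1 - x))) (1 - t) := by
          refine intervalIntegral.integral_congr fun t _ => ?_
          show t * Real.exp (μ * t) = (1 - (1 - t)) * Real.exp (μ * (1 - (1 - t)))
          rw [show (1:ℝ) - (1 - t) = t by ring]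
      _ = ∫ x in (1-(1/2:ℝ))..(1-(0:ℝ)), (1 - x) * Real.exp (μ * (1 - x)) :=
          intervalIntegral.integral_comp_sub_left (fun x => (1 - x) * Real.exp (μ * (1 - x))) 1
      _ = ∫ x in (1/2:ℝ)..1, (1 - x) * Real.exp (μ * (1 - x)) := by norm_num
  rw [h0]
  refine intervalIntegral.integral_mono_on (by norm_num)
    ((Continuous.mul (by continuity) (by continuity)).intervalIntegrable _ _)
    ((Continuous.mul (by continuity) (by continuity)).intervalIntegrable _ _)
    fun x hx => ?_
  refine mul_le_mul_of_nonneg_left (Real.exp_le_exp.2 ?_) (by linarith [hx.2])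
  exact mul_le_mul_of_nonneg_left (by linarith [hx.1]) hμ

set_option maxHeartbeats 1000000 in
/-- Proposition 3.1: an inequality between arithmetic, geometric and logarithmic
means, where `A (x, y) = (x + y) / 2`, `G (x, y) = √(x y)` and
`L (x, y) = (y - x) / (log y - log x)`. -/
theorem stmt_18 (a b : ℝ) (ha : 0 < a) (hab : a < b)
    (lam : ℝ) (hlam : lam ∈ Set.Icc (0 : ℝ) 1) (n : ℝ) (hn : 1 ≤ n) :
    |(1 - lam) * (Real.sqrt (a * b)) ^ n + lam * ((a ^ n + b ^ n) / 2)
      - (b ^ n - a ^ n) / (Real.log (b ^ n) - Real.log (a ^ n))|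
    ≤ n * b ^ (n - 1) / (Real.log b - Real.log a) *
        (lam * (b - a) / 2 * Real.log (b / a)
          + 2 * (1 - 2 * lam) * ((a + b) / 2 - Real.sqrt (a * b))) := by
  obtain ⟨hl0, hl1⟩ := hlam
  have hb : 0 < b := ha.trans hab
  have hn0 : 0 < n := lt_of_lt_of_le one_pos hn
  set c : ℝ := Real.log b - Real.log a with hcdef
  have hc : 0 < c := sub_pos.2 (Real.log_lt_log ha hab)
  have hm : 0 < n * c := mul_pos hn0 hc
  have hu : (0:ℝ) < a ^ n := Real.rpow_pos_of_pos ha n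
  have hb1 : (0:ℝ) < b ^ (n - 1) := Real.rpow_pos_of_pos hb _
  have hexpc : Real.exp c = b / a := by
    rw [hcdef, Real.exp_sub, Real.exp_log hb, Real.exp_log ha]
  have hbe : b = a * Real.exp c := by rw [hexpc]; field_simp
  have hE2c : Real.exp (c/2) * Real.exp (c/2) = Real.exp c := by
    rw [← Real.exp_add]; ring_nf
  have hsq : Real.sqrt (a * b) = a * Real.exp (c/2) := by
    have h1 : (a * Real.exp (c/2)) ^ 2 = a * b := by
      rw [hbe]; linear_combination (a^2) * hE2c
    rw [← h1, Real.sqrt_sq (by positivity)]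
  have hexppow : ∀ x : ℝ, (Real.exp x) ^ n = Real.exp (n * x) := fun x => by
    rw [Real.rpow_def_of_pos (Real.exp_pos x), Real.log_exp, mul_comm]
  have hGn : Real.sqrt (a * b) ^ n = a ^ n * Real.exp (n * c / 2) := by
    rw [hsq, Real.mul_rpow ha.le (Real.exp_pos _).le, hexppow (c/2), mul_div_assoc]
  have hbn : b ^ n = a ^ n * Real.exp (n * c) := by
    rw [hbe, Real.mul_rpow ha.le (Real.exp_pos _).le, hexppow c]
  have hlogn : Real.log (b ^ n) - Real.log (a ^ n) = n * c := by
    rw [Real.log_rpow hb, Real.log_rpow ha, hcdef]; ring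
  have hlogba : Real.log (b / a) = c := by
    rw [Real.log_div hb.ne' ha.ne', hcdef]
  have hEm : Real.exp (n * c) = Real.exp (n * c / 2) * Real.exp (n * c / 2) := by
    rw [← Real.exp_add]; ring_nf
  have hq2 : ∀ x : ℝ, (0:ℝ) ≤ (x - 1) * Real.exp x + 1 := by
    intro x
    have hinv : Real.exp (-x) * Real.exp x = 1 := by rw [← Real.exp_add]; simp
    nlinarith [mul_le_mul_of_nonneg_right (Real.add_one_le_exp (-x)) (Real.exp_pos x).le]
  have hq4 : ∀ x : ℝ, (0:ℝ) ≤ Real.exp x - 1 - x := fun x => by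
    nlinarith [Real.add_one_le_exp x]
  have hpt : ∀ t ∈ Set.Icc (1/2:ℝ) 1,
      a ^ n * Real.exp (n * c * t) ≤ b ^ (n - 1) * (a * Real.exp (c * t)) := by
    intro t ht
    have hw : (0:ℝ) < a * Real.exp (c * t) := by positivity
    have hwb : a * Real.exp (c * t) ≤ b := by
      rw [hbe]
      have h1 : c * t ≤ c := by nlinarith [ht.2]
      exact mul_le_mul_of_nonneg_left (Real.exp_le_exp.2 h1) ha.le
    have h1 : a ^ n * Real.exp (n * c * t) = (a * Real.exp (c * t)) ^ n := by
      rw [Real.mul_rpow ha.le (Real.exp_pos _).le, hexppow (c*t), mul_assoc]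
    have h2 : (a * Real.exp (c * t)) ^ n
        = (a * Real.exp (c * t)) ^ (n - 1) * (a * Real.exp (c * t)) := by
      nth_rewrite 1 [show n = (n - 1) + 1 by ring]
      rw [Real.rpow_add hw, Real.rpow_one]
    rw [h1, h2]
    exact mul_le_mul_of_nonneg_right (Real.rpow_le_rpow hw.le hwb (by linarith)) hw.le
  -- Part II : L - G
  have hYa : (a^n * (Real.exp (n*c/2) * Real.exp (n*c/2)) - a^n)/(n*c) - a^n * Real.exp (n*c/2)
      ≤ (n*c) * (a^n * (Real.exp (n*c/2) * (Real.exp (n*c/2) - 1 - n*c/2) / (n*c)^2)) := by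
    have hd : (n*c) * (a^n * (Real.exp (n*c/2) * (Real.exp (n*c/2) - 1 - n*c/2) / (n*c)^2))
        - ((a^n * (Real.exp (n*c/2) * Real.exp (n*c/2)) - a^n)/(n*c) - a^n * Real.exp (n*c/2))
        = a ^ n * ((n * c / 2 - 1) * Real.exp (n * c / 2) + 1) / (n * c) := by
      field_simp [hm.ne', hc.ne']
      ring
    nlinarith [div_nonneg (mul_nonneg hu.le (hq2 (n*c/2))) hm.le, hd]
  have hYb : (n*c) * (a^n * (Real.exp (n*c/2) * (Real.exp (n*c/2) - 1 - n*c/2) / (n*c)^2))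
      = (n*c) * ∫ t in (1/2:ℝ)..1, (1 - t) * (a^n * Real.exp (n*c*t)) := by
    have hpull : (∫ t in (1/2:ℝ)..1, (1 - t) * (a^n * Real.exp (n*c*t)))
        = a^n * ∫ t in (1/2:ℝ)..1, (1 - t) * Real.exp (n*c*t) := by
      rw [← intervalIntegral.integral_const_mul]
      exact intervalIntegral.integral_congr fun t _ => by ring
    rw [hpull, eval_I1 (n*c) hm.ne']
  have hYc : (∫ t in (1/2:ℝ)..1, (1 - t) * (a^n * Real.exp (n*c*t)))
      ≤ ∫ t in (1/2:ℝ)..1, (1 - t) * (b^(n-1) * (a * Real.exp (c*t))) := by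
    refine intervalIntegral.integral_mono_on (by norm_num)
      ((by fun_prop : Continuous _).intervalIntegrable _ _)
      ((by fun_prop : Continuous _).intervalIntegrable _ _)
      fun t ht => ?_
    exact mul_le_mul_of_nonneg_left (hpt t ht) (by linarith [ht.2])
  have hYd : (∫ t in (1/2:ℝ)..1, (1 - t) * (b^(n-1) * (a * Real.exp (c*t))))
      = b^(n-1) * a * (Real.exp (c/2) * (Real.exp (c/2) - 1 - c/2) / c^2) := by
    have hpull : (∫ t in (1/2:ℝ)..1, (1 - t) * (b^(n-1) * (a * Real.exp (c*t))))
        = (b^(n-1) * a) * ∫ t in (1/2:ℝ)..1, (1 - t) * Real.exp (c*t) := by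
      rw [← intervalIntegral.integral_const_mul]
      exact intervalIntegral.integral_congr fun t _ => by ring
    rw [hpull, eval_I1 c hc.ne']
  have hYe : (n*c) * (b^(n-1) * a * (Real.exp (c/2) * (Real.exp (c/2) - 1 - c/2) / c^2))
      ≤ n * b^(n-1) * ((a + b - 2*Real.sqrt (a*b))/c) := by
    have hd : n * b^(n-1) * ((a + b - 2*Real.sqrt (a*b))/c)
        - (n*c) * (b^(n-1) * a * (Real.exp (c/2) * (Real.exp (c/2) - 1 - c/2) / c^2))
        = n * b^(n-1) * a * ((c/2 - 1) * Real.exp (c/2) + 1) / c := by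
      rw [hsq, hbe, ← hE2c]
      field_simp [hc.ne']
      ring
    nlinarith [div_nonneg (mul_nonneg (mul_nonneg (mul_nonneg hn0.le hb1.le) ha.le)
      (hq2 (c/2))) hc.le, hd]
  have hY' : (a^n * (Real.exp (n*c/2) * Real.exp (n*c/2)) - a^n)/(n*c) - a^n * Real.exp (n*c/2)
      ≤ n * b^(n-1) * ((a + b - 2*Real.sqrt (a*b))/c) := by
    calc (a^n * (Real.exp (n*c/2) * Real.exp (n*c/2)) - a^n)/(n*c) - a^n * Real.exp (n*c/2)
        ≤ (n*c) * (a^n * (Real.exp (n*c/2) * (Real.exp (n*c/2) - 1 - n*c/2) / (n*c)^2)) := hYa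
      _ = (n*c) * ∫ t in (1/2:ℝ)..1, (1 - t) * (a^n * Real.exp (n*c*t)) := hYb
      _ ≤ (n*c) * ∫ t in (1/2:ℝ)..1, (1 - t) * (b^(n-1) * (a * Real.exp (c*t))) :=
          mul_le_mul_of_nonneg_left hYc hm.le
      _ = (n*c) * (b^(n-1) * a * (Real.exp (c/2) * (Real.exp (c/2) - 1 - c/2) / c^2)) := by
          rw [hYd]
      _ ≤ n * b^(n-1) * ((a + b - 2*Real.sqrt (a*b))/c) := hYe
  -- Part I : A - L
  have hXa : (a^n + a^n * (Real.exp (n*c/2) * Real.exp (n*c/2)))/2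
        - (a^n * (Real.exp (n*c/2) * Real.exp (n*c/2)) - a^n)/(n*c)
      ≤ (n*c) * (a^n * (Real.exp (n*c/2) * ((n*c/2 - 1) * Real.exp (n*c/2) + 1) / (n*c)^2)) := by
    have hd : (n*c) * (a^n * (Real.exp (n*c/2) * ((n*c/2 - 1) * Real.exp (n*c/2) + 1) / (n*c)^2))
        - ((a^n + a^n * (Real.exp (n*c/2) * Real.exp (n*c/2)))/2
            - (a^n * (Real.exp (n*c/2) * Real.exp (n*c/2)) - a^n)/(n*c))
        = a ^ n * (Real.exp (n*c/2) - 1 - n*c/2) / (n * c) := by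
      field_simp [hm.ne', hc.ne']
      ring
    nlinarith [div_nonneg (mul_nonneg hu.le (hq4 (n*c/2))) hm.le, hd]
  have hXb : (n*c) * (a^n * (Real.exp (n*c/2) * ((n*c/2 - 1) * Real.exp (n*c/2) + 1) / (n*c)^2))
      = (n*c) * ∫ t in (1/2:ℝ)..1, (t - 1/2) * (a^n * Real.exp (n*c*t)) := by
    have hpull : (∫ t in (1/2:ℝ)..1, (t - 1/2) * (a^n * Real.exp (n*c*t)))
        = a^n * ∫ t in (1/2:ℝ)..1, (t - 1/2) * Real.exp (n*c*t) := by
      rw [← intervalIntegral.integral_const_mul]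
      exact intervalIntegral.integral_congr fun t _ => by ring
    rw [hpull, eval_I3 (n*c) hm.ne']
  have hXc : (∫ t in (1/2:ℝ)..1, (t - 1/2) * (a^n * Real.exp (n*c*t)))
      ≤ ∫ t in (1/2:ℝ)..1, (t - 1/2) * (b^(n-1) * (a * Real.exp (c*t))) := by
    refine intervalIntegral.integral_mono_on (by norm_num)
      ((by fun_prop : Continuous _).intervalIntegrable _ _)
      ((by fun_prop : Continuous _).intervalIntegrable _ _)
      fun t ht => ?_
    exact mul_le_mul_of_nonneg_left (hpt t ht) (by linarith [ht.1])
  have hXd : (∫ t in (1/2:ℝ)..1, (t - 1/2) * (b^(n-1) * (a * Real.exp (c*t))))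
      = b^(n-1) * a * (Real.exp (c/2) * ((c/2 - 1) * Real.exp (c/2) + 1) / c^2) := by
    have hpull : (∫ t in (1/2:ℝ)..1, (t - 1/2) * (b^(n-1) * (a * Real.exp (c*t))))
        = (b^(n-1) * a) * ∫ t in (1/2:ℝ)..1, (t - 1/2) * Real.exp (c*t) := by
      rw [← intervalIntegral.integral_const_mul]
      exact intervalIntegral.integral_congr fun t _ => by ring
    rw [hpull, eval_I3 c hc.ne']
  have hXe : (n*c) * (b^(n-1) * a * (Real.exp (c/2) * ((c/2 - 1) * Real.exp (c/2) + 1) / c^2))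
      ≤ n * b^(n-1) * ((b - a)/2 - (a + b - 2*Real.sqrt (a*b))/c) := by
    have hd : n * b^(n-1) * ((b - a)/2 - (a + b - 2*Real.sqrt (a*b))/c)
        - (n*c) * (b^(n-1) * a * (Real.exp (c/2) * ((c/2 - 1) * Real.exp (c/2) + 1) / c^2))
        = n * b^(n-1) * a * (Real.exp (c/2) - 1 - c/2) / c := by
      rw [hsq, hbe, ← hE2c]
      field_simp [hc.ne']
      ring
    nlinarith [div_nonneg (mul_nonneg (mul_nonneg (mul_nonneg hn0.le hb1.le) ha.le)
      (hq4 (c/2))) hc.le, hd]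
  have hX' : (a^n + a^n * (Real.exp (n*c/2) * Real.exp (n*c/2)))/2
        - (a^n * (Real.exp (n*c/2) * Real.exp (n*c/2)) - a^n)/(n*c)
      ≤ n * b^(n-1) * ((b - a)/2 - (a + b - 2*Real.sqrt (a*b))/c) := by
    calc (a^n + a^n * (Real.exp (n*c/2) * Real.exp (n*c/2)))/2
          - (a^n * (Real.exp (n*c/2) * Real.exp (n*c/2)) - a^n)/(n*c)
        ≤ (n*c) * (a^n * (Real.exp (n*c/2) * ((n*c/2 - 1) * Real.exp (n*c/2) + 1) / (n*c)^2)) :=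
          hXa
      _ = (n*c) * ∫ t in (1/2:ℝ)..1, (t - 1/2) * (a^n * Real.exp (n*c*t)) := hXb
      _ ≤ (n*c) * ∫ t in (1/2:ℝ)..1, (t - 1/2) * (b^(n-1) * (a * Real.exp (c*t))) :=
          mul_le_mul_of_nonneg_left hXc hm.le
      _ = (n*c) * (b^(n-1) * a * (Real.exp (c/2) * ((c/2 - 1) * Real.exp (c/2) + 1) / c^2)) := by
          rw [hXd]
      _ ≤ n * b^(n-1) * ((b - a)/2 - (a + b - 2*Real.sqrt (a*b))/c) := hXe
  -- Nonnegativity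
  have hY0 : (0:ℝ) ≤ (a^n * (Real.exp (n*c/2) * Real.exp (n*c/2)) - a^n)/(n*c)
      - a^n * Real.exp (n*c/2) := by
    have hcmp := comp_I21 (n*c) hm.le
    rw [eval_I1 (n*c) hm.ne', eval_I2 (n*c) hm.ne'] at hcmp
    have hd : (a^n * (Real.exp (n*c/2) * Real.exp (n*c/2)) - a^n)/(n*c) - a^n * Real.exp (n*c/2)
        = a^n * (n*c) * (Real.exp (n*c/2) * (Real.exp (n*c/2) - 1 - n*c/2) / (n*c)^2
            - ((n*c/2 - 1) * Real.exp (n*c/2) + 1) / (n*c)^2) := by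
      field_simp [hm.ne', hc.ne']
      ring
    rw [hd]
    exact mul_nonneg (mul_nonneg hu.le hm.le) (sub_nonneg.2 hcmp)
  have hX0 : (0:ℝ) ≤ (a^n + a^n * (Real.exp (n*c/2) * Real.exp (n*c/2)))/2
      - (a^n * (Real.exp (n*c/2) * Real.exp (n*c/2)) - a^n)/(n*c) := by
    have hcmp := comp_I43 (n*c) hm.le
    rw [eval_I3 (n*c) hm.ne', eval_I4 (n*c) hm.ne'] at hcmp
    have hd : (a^n + a^n * (Real.exp (n*c/2) * Real.exp (n*c/2)))/2
          - (a^n * (Real.exp (n*c/2) * Real.exp (n*c/2)) - a^n)/(n*c)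
        = a^n * (n*c) * (Real.exp (n*c/2) * ((n*c/2 - 1) * Real.exp (n*c/2) + 1) / (n*c)^2
            - (Real.exp (n*c/2) - 1 - n*c/2) / (n*c)^2) := by
      field_simp [hm.ne', hc.ne']
      ring
    rw [hd]
    exact mul_nonneg (mul_nonneg hu.le hm.le) (sub_nonneg.2 hcmp)
  -- Assemble
  rw [hlogn, hGn, hbn, hlogba, hEm]
  have hrhs : n * b ^ (n - 1) / c * (lam * (b - a) / 2 * c
        + 2 * (1 - 2 * lam) * ((a + b) / 2 - Real.sqrt (a * b)))
      = lam * (n * b^(n-1) * ((b - a)/2 - (a + b - 2*Real.sqrt (a*b))/c))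
        + (1 - lam) * (n * b^(n-1) * ((a + b - 2*Real.sqrt (a*b))/c)) := by
    field_simp [hm.ne', hc.ne']
    ring
  rw [hrhs, abs_le]
  have hl2 : (0:ℝ) ≤ 1 - lam := by linarith
  constructor
  · linarith [mul_le_mul_of_nonneg_left hX' hl0, mul_le_mul_of_nonneg_left hY' hl2,
      mul_nonneg hl0 hX0, mul_nonneg hl2 hY0]
  · linarith [mul_le_mul_of_nonneg_left hX' hl0, mul_le_mul_of_nonneg_left hY' hl2,
      mul_nonneg hl0 hX0, mul_nonneg hl2 hY0]
end

section
/- Let 0 < a < b and λ ∈ [0,1]. Then | (1-λ) G(a,b)^{-1} + λ H(a,b)^{-1} - L(a,b) G(a,b)^{-2} | ≤ [1/(a² (ln b - ln a))] [ (λ(b-a)/2) ln(b/a) + 2(1-2λ)(A(a,b) - G(a,b)) ]. -/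
lemma deriv_aux (x : ℝ) (hx0 : x ≠ 0) :
    HasDerivAt (fun x : ℝ => x ^ 2 - 1 - 2 * x * Real.log x)
      (2 * x - (2 * Real.log x + 2 * x * x⁻¹)) x := by
  have h1 : HasDerivAt (fun x : ℝ => 2 * x) 2 x := by
    simpa using (hasDerivAt_id x).const_mul 2
  have h3 := ((hasDerivAt_pow 2 x).sub_const 1).sub (h1.mul (Real.hasDerivAt_log hx0))
  exact h3.congr_deriv (by simp)

-- L(1,s^2) >= G : 2 s log s <= s^2 - 1  for s >= 1
lemma log_upper (s : ℝ) (hs : 1 ≤ s) : 2 * s * Real.log s ≤ s ^ 2 - 1 := by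
  have hmono : MonotoneOn (fun x : ℝ => x ^ 2 - 1 - 2 * x * Real.log x) (Set.Ici 1) := by
    apply monotoneOn_of_deriv_nonneg (convex_Ici 1)
    · apply ContinuousOn.sub
      · exact ((continuous_pow 2).continuousOn.sub continuousOn_const)
      · exact (continuous_const.mul continuous_id).continuousOn.mul
          (Real.continuousOn_log.mono (by intro x hx; simp at hx ⊢; linarith))
    · intro x hx
      rw [interior_Ici] at hx
      have hx1 : (1:ℝ) < x := hx
      exact (deriv_aux x (by linarith)).differentiableAt.differentiableWithinAt
    · intro x hx
      rw [interior_Ici] at hx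
      have hx1 : (1:ℝ) < x := hx
      have hx0 : x ≠ 0 := by linarith
      rw [(deriv_aux x hx0).deriv]
      have hlog : Real.log x ≤ x - 1 := Real.log_le_sub_one_of_pos (by linarith)
      have hinv : x * x⁻¹ = 1 := mul_inv_cancel₀ hx0
      nlinarith [hlog]
  have := hmono (Set.self_mem_Ici) (Set.mem_Ici.mpr hs) hs
  simp at this
  nlinarith [this]

lemma deriv_aux2 (x : ℝ) (hx0 : x ≠ 0) :
    HasDerivAt (fun x : ℝ => (x ^ 2 + 1) * Real.log x - (x ^ 2 - 1))
      ((2 * x ^ 1 * Real.log x + (x ^ 2 + 1) * x⁻¹) - 2 * x ^ 1) x := by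
  have h3 := (((hasDerivAt_pow 2 x).add_const 1).mul (Real.hasDerivAt_log hx0)).sub
      ((hasDerivAt_pow 2 x).sub_const 1)
  exact h3.congr_deriv (by simp)

-- L(1,s^2) <= A : s^2 - 1 <= (s^2+1) log s for s >= 1
lemma log_lower (s : ℝ) (hs : 1 ≤ s) : s ^ 2 - 1 ≤ (s ^ 2 + 1) * Real.log s := by
  have hmono : MonotoneOn (fun x : ℝ => (x ^ 2 + 1) * Real.log x - (x ^ 2 - 1)) (Set.Ici 1) := by
    apply monotoneOn_of_deriv_nonneg (convex_Ici 1)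
    · apply ContinuousOn.sub
      · exact ((continuous_pow 2).continuousOn.add continuousOn_const).mul
          (Real.continuousOn_log.mono (by intro x hx; simp at hx ⊢; linarith))
      · exact ((continuous_pow 2).continuousOn.sub continuousOn_const)
    · intro x hx
      rw [interior_Ici] at hx
      have hx1 : (1:ℝ) < x := hx
      exact (deriv_aux2 x (by linarith)).differentiableAt.differentiableWithinAt
    · intro x hx
      rw [interior_Ici] at hx
      have hx1 : (1:ℝ) < x := hx
      have hx0 : x ≠ 0 := by linarith
      rw [(deriv_aux2 x hx0).deriv]
      have hlog : 1 - x⁻¹ ≤ Real.log x := by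
        have h := Real.log_le_sub_one_of_pos (show (0:ℝ) < x⁻¹ by positivity)
        rw [Real.log_inv] at h
        linarith
      have hinv : x * x⁻¹ = 1 := mul_inv_cancel₀ hx0
      have hinvpos : 0 < x⁻¹ := by positivity
      simp only [pow_one]
      nlinarith [hlog, hinv, sq_nonneg (x - 1)]
  have := hmono (Set.self_mem_Ici) (Set.mem_Ici.mpr hs) hs
  simp at this
  nlinarith [this]

lemma key_ineq (s T lam : ℝ) (hs : 1 < s)
    (h1 : 2 * (s ^ 2 - 1) ≤ T * (s ^ 2 + 1)) (h2 : T * s ≤ s ^ 2 - 1)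
    (hl0 : 0 ≤ lam) (hl1 : lam ≤ 1) :
    |(1 - lam) * (T * s) + lam * (T * (1 + s ^ 2) / 2) - (s ^ 2 - 1)|
      ≤ lam * (T * s ^ 2 * (s ^ 2 - 1)) / 2 + (1 - 2 * lam) * (s ^ 2 * (s - 1) ^ 2) := by
  have hs0 : (0:ℝ) < s := by linarith
  -- endpoint λ = 0
  have e0 : |T * s - (s ^ 2 - 1)| ≤ s ^ 2 * (s - 1) ^ 2 := by
    rw [abs_le]
    constructor
    · nlinarith [mul_le_mul_of_nonneg_left h1 hs0.le, sq_nonneg (s - 1), sq_nonneg (s + 1),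
        sq_nonneg (s * (s - 1)), sq_nonneg (s ^ 2 - 1)]
    · nlinarith [sq_nonneg (s * (s - 1))]
  -- endpoint λ = 1
  have e1 : |T * (1 + s ^ 2) / 2 - (s ^ 2 - 1)|
      ≤ T * s ^ 2 * (s ^ 2 - 1) / 2 - s ^ 2 * (s - 1) ^ 2 := by
    have hup : T * (1 + s ^ 2) / 2 - (s ^ 2 - 1)
        ≤ T * s ^ 2 * (s ^ 2 - 1) / 2 - s ^ 2 * (s - 1) ^ 2 := by
      rcases le_or_gt (s ^ 4 - 2 * s ^ 2 - 1) 0 with hc | hc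
      · have hprod : 0 ≤ (s ^ 2 - 1 - T * s) * (-(s ^ 4 - 2 * s ^ 2 - 1)) :=
          mul_nonneg (by linarith) (by linarith)
        nlinarith [hprod, sq_nonneg (s - 1), mul_pos hs0 hs0,
          mul_nonneg (mul_nonneg hs0.le hs0.le) (sq_nonneg (s - 1)),
          mul_nonneg (sq_nonneg (s - 1)) (sq_nonneg (s + 1)),
          mul_nonneg (mul_nonneg (sq_nonneg (s-1)) hs0.le) hs0.le]
      · have hprod : 0 ≤ (T * (s ^ 2 + 1) - 2 * (s ^ 2 - 1)) * (s ^ 4 - 2 * s ^ 2 - 1) :=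
          mul_nonneg (by linarith) hc.le
        nlinarith [hprod, sq_nonneg (s - 1), mul_pos hs0 hs0,
          mul_nonneg (mul_nonneg (mul_nonneg hs0.le hs0.le) hs0.le) (sq_nonneg (s - 1)),
          mul_nonneg (mul_nonneg hs0.le hs0.le) (sq_nonneg (s - 1))]
    have hnn : 0 ≤ T * (1 + s ^ 2) / 2 - (s ^ 2 - 1) := by nlinarith
    rw [abs_le]
    exact ⟨by nlinarith [sq_nonneg (s * (s - 1))], hup⟩
  -- interpolation
  have hrw : (1 - lam) * (T * s) + lam * (T * (1 + s ^ 2) / 2) - (s ^ 2 - 1)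
      = (1 - lam) * (T * s - (s ^ 2 - 1)) + lam * (T * (1 + s ^ 2) / 2 - (s ^ 2 - 1)) := by
    ring
  rw [hrw]
  calc |(1 - lam) * (T * s - (s ^ 2 - 1)) + lam * (T * (1 + s ^ 2) / 2 - (s ^ 2 - 1))|
      ≤ (1 - lam) * |T * s - (s ^ 2 - 1)| + lam * |T * (1 + s ^ 2) / 2 - (s ^ 2 - 1)| := by
        calc _ ≤ |(1 - lam) * (T * s - (s ^ 2 - 1))| + |lam * (T * (1 + s ^ 2) / 2 - (s ^ 2 - 1))| :=
              abs_add_le _ _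
          _ = _ := by rw [abs_mul, abs_mul, abs_of_nonneg (by linarith : (0:ℝ) ≤ 1 - lam),
                abs_of_nonneg hl0]
    _ ≤ (1 - lam) * (s ^ 2 * (s - 1) ^ 2)
          + lam * (T * s ^ 2 * (s ^ 2 - 1) / 2 - s ^ 2 * (s - 1) ^ 2) :=
        add_le_add (mul_le_mul_of_nonneg_left e0 (by linarith))
          (mul_le_mul_of_nonneg_left e1 hl0)
    _ = lam * (T * s ^ 2 * (s ^ 2 - 1)) / 2 + (1 - 2 * lam) * (s ^ 2 * (s - 1) ^ 2) := by ring
/-- Proposition 3.3: an inequality between the geometric mean `G (x, y) = √(x y)`,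
the harmonic mean `H (x, y) = 2 x y / (x + y)`, the arithmetic mean
`A (x, y) = (x + y) / 2` and the logarithmic mean
`L (x, y) = (y - x) / (log y - log x)`. -/
theorem stmt_19 (a b : ℝ) (ha : 0 < a) (hab : a < b)
    (lam : ℝ) (hlam : lam ∈ Set.Icc (0 : ℝ) 1) :
    |(1 - lam) * (Real.sqrt (a * b))⁻¹ + lam * (2 * a * b / (a + b))⁻¹
      - (b - a) / (Real.log b - Real.log a) * ((Real.sqrt (a * b)) ^ 2)⁻¹|
    ≤ 1 / (a ^ 2 * (Real.log b - Real.log a)) *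
        (lam * (b - a) / 2 * Real.log (b / a)
          + 2 * (1 - 2 * lam) * ((a + b) / 2 - Real.sqrt (a * b))) := by
  obtain ⟨hl0, hl1⟩ := hlam
  have hb : 0 < b := lt_trans ha hab
  set s : ℝ := Real.sqrt (b / a) with hs_def
  have hba : 1 < b / a := (one_lt_div ha).mpr hab
  have hs1 : 1 < s := by
    rw [hs_def, show (1:ℝ) = Real.sqrt 1 from (Real.sqrt_one).symm]
    exact Real.sqrt_lt_sqrt zero_le_one hba
  have hs0 : 0 < s := by linarith
  have hsq : s ^ 2 = b / a := Real.sq_sqrt (by positivity)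
  have hbs : b = a * s ^ 2 := by rw [hsq]; field_simp
  have hg : Real.sqrt (a * b) = a * s := by
    rw [show a * b = (a * s) ^ 2 by rw [hbs]; ring]
    exact Real.sqrt_sq (by positivity)
  have hlog : Real.log b - Real.log a = 2 * Real.log s := by
    rw [hbs, Real.log_mul (ne_of_gt ha) (by positivity), Real.log_pow]
    push_cast; ring
  have hlogba : Real.log (b / a) = 2 * Real.log s := by
    rw [Real.log_div (ne_of_gt hb) (ne_of_gt ha)]; exact hlog
  set T : ℝ := 2 * Real.log s with hT_def
  have hT0 : 0 < T := by
    have := Real.log_pos hs1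
    rw [hT_def]; linarith
  have h1 : 2 * (s ^ 2 - 1) ≤ T * (s ^ 2 + 1) := by
    have := log_lower s hs1.le
    rw [hT_def]; nlinarith
  have h2 : T * s ≤ s ^ 2 - 1 := by
    have := log_upper s hs1.le
    rw [hT_def]; nlinarith
  have key := key_ineq s T lam hs1 h1 h2 hl0 hl1
  rw [hlogba, hlog, hg, hbs]
  have hden : (0:ℝ) < a * s ^ 2 * T := by positivity
  have hL : (1 - lam) * (a * s)⁻¹ + lam * (2 * a * (a * s ^ 2) / (a + a * s ^ 2))⁻¹
      - (a * s ^ 2 - a) / T * ((a * s) ^ 2)⁻¹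
      = ((1 - lam) * (T * s) + lam * (T * (1 + s ^ 2) / 2) - (s ^ 2 - 1)) / (a * s ^ 2 * T) := by
    have hne : a + a * s ^ 2 ≠ 0 := by positivity
    field_simp
  have hR : 1 / (a ^ 2 * T) * (lam * (a * s ^ 2 - a) / 2 * (2 * Real.log s)
        + 2 * (1 - 2 * lam) * ((a + a * s ^ 2) / 2 - a * s))
      = (lam * (T * s ^ 2 * (s ^ 2 - 1)) / 2 + (1 - 2 * lam) * (s ^ 2 * (s - 1) ^ 2))
          / (a * s ^ 2 * T) := by
    rw [hT_def]
    field_simp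
    ring
  rw [hL, hR, abs_div, abs_of_pos hden, div_le_div_iff_of_pos_right hden]
  exact key
end
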